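/- arXiv:1202.4330 — 4 statements merged into one kernel-verified Lean document; each statement's English description precedes it below -/
import Mathlib

section
/- Let M ≥ 2 be an integer and let κ be a weight on finite words over Fin M having geometric decay with constants c ≥ 1 and θ ∈ (0,1). Then the ultrametric space ((Fin M)^ℕ, d_κ) is f-embeddable: there exist L ∈ ℕ, a constant c' ≥ 1 and a map φ : (Fin M)^ℕ → ℝ^L (Euclidean norm) such that (1/c')·d_κ(x,y) ≤ ‖φ(x) − φ(y)‖ ≤ c'·d_κ(x,y) for all x, y. -/
/-- A weight on finite words over `Fin M`: positive, and monotone non-increasing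
along prefixes. -/
def IsWeight {M : ℕ} (κ : List (Fin M) → ℝ) : Prop :=
  (∀ w, 0 < κ w) ∧ ∀ u v : List (Fin M), u <+: v → κ v ≤ κ u

/-- Geometric decay of a weight with constants `c ≥ 1` and `θ ∈ (0,1)`:
`κ(w) ≤ c · θ^(ℓ(w) − ℓ(u)) · κ(u)` whenever `u` is a prefix of `w`. -/
def GeomDecay {M : ℕ} (κ : List (Fin M) → ℝ) (c θ : ℝ) : Prop :=
  ∀ u w : List (Fin M), u <+: w → κ w ≤ c * θ ^ (w.length - u.length) * κ u

-- The ultrametric `d_κ` on `(Fin M)^ℕ`: `d_κ(x,x) = 0` and for `x ≠ y`,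
-- `d_κ(x,y) = κ(x ∧ y)` where `x ∧ y` is the longest common prefix of `x` and `y`.
open Classical in
noncomputable def dkappa {M : ℕ} (κ : List (Fin M) → ℝ) (x y : ℕ → Fin M) : ℝ :=
  if h : x = y then 0
  else κ (List.ofFn fun i : Fin (Nat.find (Function.ne_iff.mp h)) => x i)

namespace AuxFEmb

variable {M : ℕ}

/-- The word consisting of the first `n` letters of `x`. -/
noncomputable def wrd (x : ℕ → Fin M) (n : ℕ) : List (Fin M) :=
  List.ofFn fun i : Fin n => x i

@[simp] lemma wrd_length (x : ℕ → Fin M) (n : ℕ) : (wrd x n).length = n := by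
  simp [wrd]

lemma wrd_zero (x : ℕ → Fin M) : wrd x 0 = [] := by simp [wrd]

lemma wrd_prefix (x : ℕ → Fin M) {n m : ℕ} (h : n ≤ m) : wrd x n <+: wrd x m := by
  have : (wrd x m).take n = wrd x n := by
    apply List.ext_getElem <;> simp [wrd, h]
  exact this ▸ List.take_prefix n (wrd x m)

lemma wrd_congr {x y : ℕ → Fin M} {n : ℕ} (h : ∀ i < n, x i = y i) :
    wrd x n = wrd y n := by
  unfold wrd; congr 1; funext i; exact h i i.isLt

section Terms

variable (κ : List (Fin M) → ℝ) (J : ℕ)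

/-- The `t`-th term contributing to coordinate `(j, a)` of the embedding of `x`. -/
noncomputable def trm (x : ℕ → Fin M) (j : ℕ) (a : Fin M) (t : ℕ) : ℝ :=
  if x (j + t * J) = a then κ (wrd x (j + t * J)) else 0

variable {κ J}

lemma trm_nonneg (hκ : IsWeight κ) (x : ℕ → Fin M) (j : ℕ) (a : Fin M) (t : ℕ) :
    0 ≤ trm κ J x j a t := by
  unfold trm; split
  · exact (hκ.1 _).le
  · exact le_rfl

lemma trm_le (hκ : IsWeight κ) (x : ℕ → Fin M) (j : ℕ) (a : Fin M) (t : ℕ) :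
    trm κ J x j a t ≤ κ (wrd x (j + t * J)) := by
  unfold trm; split
  · exact le_rfl
  · exact (hκ.1 _).le

lemma kappa_wrd_le {c θ : ℝ} (hdec : GeomDecay κ c θ) (x : ℕ → Fin M) {n m : ℕ}
    (h : n ≤ m) : κ (wrd x m) ≤ c * θ ^ (m - n) * κ (wrd x n) := by
  have := hdec (wrd x n) (wrd x m) (wrd_prefix x h)
  simpa using this

lemma summable_trm (hκ : IsWeight κ) {c θ : ℝ} (hc : 1 ≤ c) (hθ0 : 0 < θ) (hθ1 : θ < 1)
    (hdec : GeomDecay κ c θ) (hJ : 1 ≤ J) (x : ℕ → Fin M) (j : ℕ) (a : Fin M) :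
    Summable (trm κ J x j a) := by
  have hr0 : (0:ℝ) ≤ θ ^ J := pow_nonneg hθ0.le J
  have hr1 : θ ^ J < 1 := pow_lt_one₀ hθ0.le hθ1 (by omega)
  refine Summable.of_nonneg_of_le (trm_nonneg hκ x j a)
    (fun t => ?_) ((summable_geometric_of_lt_one hr0 hr1).mul_left (c * κ []))
  have h1 : trm κ J x j a t ≤ κ (wrd x (j + t * J)) := trm_le hκ x j a t
  have h2 : κ (wrd x (j + t * J)) ≤ c * θ ^ (j + t * J - 0) * κ (wrd x 0) :=
    kappa_wrd_le hdec x (Nat.zero_le _)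
  rw [wrd_zero] at h2
  have h3 : θ ^ (j + t * J - 0) ≤ (θ ^ J) ^ t := by
    rw [← pow_mul]
    exact pow_le_pow_of_le_one hθ0.le hθ1.le (by rw [Nat.mul_comm J t]; omega)
  have hκ0 : 0 ≤ κ [] := (hκ.1 _).le
  calc trm κ J x j a t ≤ c * θ ^ (j + t * J - 0) * κ (wrd x 0) := h1.trans h2
    _ = c * κ [] * θ ^ (j + t * J - 0) := by rw [wrd_zero]; ring
    _ ≤ c * κ [] * (θ ^ J) ^ t := by
        apply mul_le_mul_of_nonneg_left h3 (by positivity)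

/-- Per-term bound on the difference of terms, deep enough in the tree. -/
lemma trm_diff_le (hκ : IsWeight κ) {c θ : ℝ} (hc : 1 ≤ c) (hθ0 : 0 < θ) (hθ1 : θ < 1)
    (hdec : GeomDecay κ c θ) {x y : ℕ → Fin M} {n : ℕ}
    (hagree : ∀ i < n, x i = y i) (j : ℕ) (a : Fin M) {t : ℕ} (ht : n ≤ j + t * J) :
    |trm κ J x j a t - trm κ J y j a t| ≤ 2 * c * θ ^ (j + t * J - n) * κ (wrd x n) := by
  have hx : trm κ J x j a t ≤ c * θ ^ (j + t * J - n) * κ (wrd x n) :=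
    (trm_le hκ x j a t).trans (kappa_wrd_le hdec x ht)
  have hy : trm κ J y j a t ≤ c * θ ^ (j + t * J - n) * κ (wrd x n) := by
    have := (trm_le hκ y j a t).trans (kappa_wrd_le hdec y ht)
    rwa [wrd_congr (fun i hi => (hagree i hi).symm)] at this
  have h1 := trm_nonneg hκ (J := J) x j a t
  have h2 := trm_nonneg hκ (J := J) y j a t
  rw [abs_sub_le_iff]
  constructor <;> nlinarith

lemma trm_diff_zero {x y : ℕ → Fin M} {n : ℕ}
    (hagree : ∀ i < n, x i = y i) (j : ℕ) (a : Fin M) {t : ℕ} (ht : j + t * J < n) :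
    trm κ J x j a t - trm κ J y j a t = 0 := by
  have hxy : x (j + t * J) = y (j + t * J) := hagree _ ht
  have hw : wrd x (j + t * J) = wrd y (j + t * J) :=
    wrd_congr (fun i hi => hagree i (by omega))
  simp [trm, hxy, hw]

end Terms

end AuxFEmb

open AuxFEmb in
/-- An ultrametric Cantor set `((Fin M)^ℕ, d_κ)` with a geometrically decaying
weight is f-embeddable into a finite-dimensional Euclidean space. -/
theorem fEmbeddable_of_geomDecay {M : ℕ} (hM : 2 ≤ M)
    (κ : List (Fin M) → ℝ) (hκ : IsWeight κ)
    (c θ : ℝ) (hc : 1 ≤ c) (hθ0 : 0 < θ) (hθ1 : θ < 1)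
    (hdec : GeomDecay κ c θ) :
    ∃ (L : ℕ) (c' : ℝ) (φ : (ℕ → Fin M) → EuclideanSpace ℝ (Fin L)),
      1 ≤ c' ∧ ∀ x y : ℕ → Fin M,
        (1 / c') * dkappa κ x y ≤ ‖φ x - φ y‖ ∧
        ‖φ x - φ y‖ ≤ c' * dkappa κ x y := by
  classical
  -- choose the scale-spacing J
  obtain ⟨N, hN⟩ := exists_pow_lt_of_lt_one (x := 1 / (8 * c)) (by positivity) hθ1
  set J : ℕ := N + 1 with hJdef
  have hJ : 1 ≤ J := by omega
  have hJ8 : θ ^ J ≤ 1 / (8 * c) :=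
    (pow_le_pow_of_le_one hθ0.le hθ1.le (by omega)).trans hN.le
  have hr0 : (0:ℝ) ≤ θ ^ J := pow_nonneg hθ0.le J
  have hrpos : (0:ℝ) < θ ^ J := pow_pos hθ0 J
  have h8c : θ ^ J * (8 * c) ≤ 1 := by
    rw [le_div_iff₀ (by positivity)] at hJ8; linarith
  have hrhalf : θ ^ J ≤ 1 / 2 := by nlinarith
  have hr1 : θ ^ J < 1 := by linarith
  have h1r : (1:ℝ) / 2 ≤ 1 - θ ^ J := by linarith
  have h1rpos : (0:ℝ) < 1 - θ ^ J := by linarith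
  -- the coordinates of the embedding
  set g : (ℕ → Fin M) → ℕ → Fin M → ℝ :=
    fun x j a => ∑' t, trm κ J x j a t with hgdef
  have hsum : ∀ (x : ℕ → Fin M) (j : ℕ) (a : Fin M), Summable (trm κ J x j a) :=
    fun x j a => summable_trm hκ hc hθ0 hθ1 hdec hJ x j a
  -- key upper bound per coordinate
  have coordA : ∀ (x y : ℕ → Fin M) (n : ℕ), (∀ i < n, x i = y i) →
      ∀ (j : ℕ) (a : Fin M), |g x j a - g y j a| ≤ 4 * c * κ (wrd x n) := by
    intro x y n hagree j a
    have hκn : 0 < κ (wrd x n) := hκ.1 _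
    set d : ℕ → ℝ := fun t => trm κ J x j a t - trm κ J y j a t with hddef
    have hsd : Summable d := (hsum x j a).sub (hsum y j a)
    have hdiff : g x j a - g y j a = ∑' t, d t := (Summable.tsum_sub (hsum x j a) (hsum y j a)).symm
    have hex : ∃ t, n ≤ j + t * J := ⟨n, by nlinarith [Nat.le_mul_of_pos_right n (show 0 < J by omega)]⟩
    set t₀ : ℕ := Nat.find hex with ht₀def
    have ht₀ : n ≤ j + t₀ * J := Nat.find_spec hex
    have hzero : ∀ t < t₀, d t = 0 := by
      intro t ht
      have := Nat.find_min hex ht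
      exact trm_diff_zero hagree j a (by omega)
    have key : ∑' t, d t = ∑' s, d (s + t₀) := by
      have h := Summable.sum_add_tsum_nat_add t₀ hsd
      rw [Finset.sum_eq_zero (fun i hi => hzero i (Finset.mem_range.mp hi))] at h
      linarith
    have hterm : ∀ s : ℕ, |d (s + t₀)| ≤ (2 * c * κ (wrd x n)) * (θ ^ J) ^ s := by
      intro s
      have hle : n ≤ j + (s + t₀) * J := le_trans ht₀ (by nlinarith [Nat.mul_le_mul_right J (Nat.le_add_left t₀ s)])
      have h1 : |d (s + t₀)| ≤ 2 * c * θ ^ (j + (s + t₀) * J - n) * κ (wrd x n) :=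
        trm_diff_le hκ hc hθ0 hθ1 hdec hagree j a hle
      have h2 : θ ^ (j + (s + t₀) * J - n) ≤ (θ ^ J) ^ s := by
        rw [← pow_mul]
        apply pow_le_pow_of_le_one hθ0.le hθ1.le
        have e1 : j + (s + t₀) * J = (j + t₀ * J) + s * J := by ring
        have : J * s = s * J := by ring
        omega
      calc |d (s + t₀)| ≤ 2 * c * θ ^ (j + (s + t₀) * J - n) * κ (wrd x n) := h1
        _ = (2 * c * κ (wrd x n)) * θ ^ (j + (s + t₀) * J - n) := by ring
        _ ≤ (2 * c * κ (wrd x n)) * (θ ^ J) ^ s := by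
            apply mul_le_mul_of_nonneg_left h2 (by positivity)
    have hsd' : Summable fun s => d (s + t₀) := (summable_nat_add_iff t₀).mpr hsd
    have hgeom : Summable fun s : ℕ => (2 * c * κ (wrd x n)) * (θ ^ J) ^ s :=
      (summable_geometric_of_lt_one hr0 hr1).mul_left _
    have habs : |∑' s, d (s + t₀)| ≤ (2 * c * κ (wrd x n)) * (1 - θ ^ J)⁻¹ := by
      calc |∑' s, d (s + t₀)| ≤ ∑' s, |d (s + t₀)| := by
            simpa [Real.norm_eq_abs] using norm_tsum_le_tsum_norm (f := fun s => d (s + t₀))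
              (by simpa [Real.norm_eq_abs] using hsd'.abs)
        _ ≤ ∑' s : ℕ, (2 * c * κ (wrd x n)) * (θ ^ J) ^ s :=
            Summable.tsum_le_tsum hterm hsd'.abs hgeom
        _ = (2 * c * κ (wrd x n)) * (1 - θ ^ J)⁻¹ := by
            rw [tsum_mul_left, tsum_geometric_of_lt_one hr0 hr1]
    rw [hdiff, key]
    have hinv : (1 - θ ^ J)⁻¹ ≤ 2 := by
      rw [inv_le_comm₀ h1rpos (by norm_num)]; linarith
    calc |∑' s, d (s + t₀)| ≤ (2 * c * κ (wrd x n)) * (1 - θ ^ J)⁻¹ := habs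
      _ ≤ (2 * c * κ (wrd x n)) * 2 := by
          apply mul_le_mul_of_nonneg_left hinv (by positivity)
      _ = 4 * c * κ (wrd x n) := by ring
  -- key lower bound on the distinguished coordinate
  have coordB : ∀ (x y : ℕ → Fin M) (n : ℕ), (∀ i < n, x i = y i) → x n ≠ y n →
      (1 / 2 : ℝ) * κ (wrd x n) ≤ g x (n % J) (x n) - g y (n % J) (x n) := by
    intro x y n hagree hne
    have hκn : 0 < κ (wrd x n) := hκ.1 _
    set j : ℕ := n % J with hjdef
    set a : Fin M := x n with hadef
    set q : ℕ := n / J with hqdef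
    have hq : j + q * J = n := Nat.mod_add_div' n J
    set d : ℕ → ℝ := fun t => trm κ J x j a t - trm κ J y j a t with hddef
    have hsd : Summable d := (hsum x j a).sub (hsum y j a)
    have hdiff : g x j a - g y j a = ∑' t, d t := (Summable.tsum_sub (hsum x j a) (hsum y j a)).symm
    have hzero : ∀ t < q, d t = 0 := by
      intro t ht
      have h1 : t * J + J ≤ q * J := by
        calc t * J + J = (t + 1) * J := by ring
          _ ≤ q * J := Nat.mul_le_mul_right J ht
      exact trm_diff_zero hagree j a (by omega)
    have hdq : d q = κ (wrd x n) := by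
      have h1 : trm κ J x j a q = κ (wrd x n) := by
        rw [trm, if_pos (by rw [hq])]
        rw [hq]
      have h2 : trm κ J y j a q = 0 := by
        rw [trm, if_neg (by rw [hq]; exact fun h => hne h.symm)]
      rw [hddef]; simp only []; rw [h1, h2, sub_zero]
    have key : ∑' t, d t = ∑' s, d (s + q) := by
      have h := Summable.sum_add_tsum_nat_add q hsd
      rw [Finset.sum_eq_zero (fun i hi => hzero i (Finset.mem_range.mp hi))] at h
      linarith
    have hsd' : Summable fun s => d (s + q) := (summable_nat_add_iff q).mpr hsd
    have key2 : ∑' s, d (s + q) = d q + ∑' s, d (s + 1 + q) := by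
      have := Summable.tsum_eq_zero_add hsd'
      simpa using this
    have hterm : ∀ s : ℕ, |d (s + 1 + q)| ≤ (2 * c * κ (wrd x n)) * (θ ^ J) ^ (s + 1) := by
      intro s
      have hle : n ≤ j + (s + 1 + q) * J := by
        have : j + (s + 1 + q) * J = (j + q * J) + (s + 1) * J := by ring
        omega
      have h1 : |d (s + 1 + q)| ≤ 2 * c * θ ^ (j + (s + 1 + q) * J - n) * κ (wrd x n) :=
        trm_diff_le hκ hc hθ0 hθ1 hdec hagree j a hle
      have hexp : j + (s + 1 + q) * J - n = J * (s + 1) := by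
        have : j + (s + 1 + q) * J = (j + q * J) + J * (s + 1) := by ring
        omega
      rw [hexp, pow_mul] at h1
      calc |d (s + 1 + q)| ≤ 2 * c * (θ ^ J) ^ (s + 1) * κ (wrd x n) := h1
        _ = (2 * c * κ (wrd x n)) * (θ ^ J) ^ (s + 1) := by ring
    have hsd'' : Summable fun s => d (s + 1 + q) := by
      have := (summable_nat_add_iff (q + 1)).mpr hsd
      apply this.congr
      intro s; congr 1; omega
    have hgeom : Summable fun s : ℕ => (2 * c * κ (wrd x n)) * (θ ^ J) ^ (s + 1) := by
      apply Summable.mul_left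
      exact ((summable_geometric_of_lt_one hr0 hr1).mul_right (θ ^ J)).congr
        (fun s => (pow_succ _ _).symm)
    have habs : |∑' s, d (s + 1 + q)| ≤ (2 * c * κ (wrd x n)) * (θ ^ J * (1 - θ ^ J)⁻¹) := by
      calc |∑' s, d (s + 1 + q)| ≤ ∑' s, |d (s + 1 + q)| := by
            simpa [Real.norm_eq_abs] using norm_tsum_le_tsum_norm (f := fun s => d (s + 1 + q))
              (by simpa [Real.norm_eq_abs] using hsd''.abs)
        _ ≤ ∑' s : ℕ, (2 * c * κ (wrd x n)) * (θ ^ J) ^ (s + 1) :=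
            Summable.tsum_le_tsum hterm hsd''.abs hgeom
        _ = (2 * c * κ (wrd x n)) * (θ ^ J * (1 - θ ^ J)⁻¹) := by
            rw [tsum_mul_left]
            congr 1
            calc ∑' s : ℕ, (θ ^ J) ^ (s + 1) = ∑' s : ℕ, (θ ^ J) ^ s * θ ^ J :=
                  tsum_congr fun s => pow_succ _ _
              _ = (1 - θ ^ J)⁻¹ * θ ^ J := by
                  rw [tsum_mul_right, tsum_geometric_of_lt_one hr0 hr1]
              _ = θ ^ J * (1 - θ ^ J)⁻¹ := by ring
    -- numerical: 2 c θ^J/(1-θ^J) ≤ 1/2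
    have hnum : (2 * c * κ (wrd x n)) * (θ ^ J * (1 - θ ^ J)⁻¹) ≤ (1 / 2) * κ (wrd x n) := by
      have hinv : (1 - θ ^ J)⁻¹ ≤ 2 := by
        rw [inv_le_comm₀ h1rpos (by norm_num)]; linarith
      have h1 : θ ^ J * (1 - θ ^ J)⁻¹ ≤ 2 * θ ^ J := by
        calc θ ^ J * (1 - θ ^ J)⁻¹ ≤ θ ^ J * 2 := by
              apply mul_le_mul_of_nonneg_left hinv hr0
          _ = 2 * θ ^ J := by ring
      calc (2 * c * κ (wrd x n)) * (θ ^ J * (1 - θ ^ J)⁻¹)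
          ≤ (2 * c * κ (wrd x n)) * (2 * θ ^ J) := by
            apply mul_le_mul_of_nonneg_left h1 (by positivity)
        _ = (θ ^ J * (8 * c)) * ((1/2) * κ (wrd x n)) := by ring
        _ ≤ 1 * ((1/2) * κ (wrd x n)) := by
            apply mul_le_mul_of_nonneg_right h8c (by positivity)
        _ = (1/2) * κ (wrd x n) := by ring
    have htail : -((1/2) * κ (wrd x n)) ≤ ∑' s, d (s + 1 + q) := by
      have := (abs_le.mp (habs.trans hnum)).1
      linarith
    rw [hdiff, key, key2, hdq]
    linarith
  -- assemble the embedding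
  set ι := Fin J × Fin M
  set Φ : (ℕ → Fin M) → EuclideanSpace ℝ ι := fun x => WithLp.toLp 2 (fun p : ι => g x p.1 p.2) with hΦdef
  set e := LinearIsometryEquiv.piLpCongrLeft 2 ℝ ℝ (finProdFinEquiv : Fin J × Fin M ≃ Fin (J * M))
  refine ⟨J * M, max 2 (Real.sqrt (J * M) * (4 * c)), fun x => e (Φ x), ?_, ?_⟩
  · exact le_trans (by norm_num) (le_max_left _ _)
  intro x y
  set c' : ℝ := max 2 (Real.sqrt (J * M) * (4 * c)) with hc'def
  have hc'2 : (2:ℝ) ≤ c' := le_max_left _ _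
  have hc'pos : (0:ℝ) < c' := by linarith
  have hnorm : ‖e (Φ x) - e (Φ y)‖ = ‖Φ x - Φ y‖ := by
    rw [← LinearIsometryEquiv.map_sub, LinearIsometryEquiv.norm_map]
  by_cases h : x = y
  · subst h
    rw [dkappa, dif_pos rfl]
    simp
  · -- the splitting depth
    have h' : ∃ i, x i ≠ y i := Function.ne_iff.mp h
    set n : ℕ := Nat.find h' with hndef
    have hxy : x n ≠ y n := Nat.find_spec h'
    have hagree : ∀ i < n, x i = y i := fun i hi => not_not.mp (Nat.find_min h' hi)
    have hκn : 0 < κ (wrd x n) := hκ.1 _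
    have hd : dkappa κ x y = κ (wrd x n) := by
      rw [dkappa, dif_neg h]
      rfl
    have happly : ∀ p : ι, (Φ x - Φ y) p = g x p.1 p.2 - g y p.1 p.2 := fun p => rfl
    constructor
    · -- lower bound
      have hj : n % J < J := Nat.mod_lt n (by omega)
      set p : ι := (⟨n % J, hj⟩, x n) with hpdef
      have hcb := coordB x y n hagree hxy
      have hcoord : (1/2 : ℝ) * κ (wrd x n) ≤ |(Φ x - Φ y) p| := by
        rw [happly p]
        exact le_trans hcb (le_abs_self _)
      have hle_norm : |(Φ x - Φ y) p| ≤ ‖Φ x - Φ y‖ := by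
        rw [EuclideanSpace.norm_eq]
        rw [show |(Φ x - Φ y) p| = Real.sqrt (|(Φ x - Φ y) p| ^ 2) from
          (Real.sqrt_sq (abs_nonneg _)).symm]
        apply Real.sqrt_le_sqrt
        calc |(Φ x - Φ y) p| ^ 2 = ‖(Φ x - Φ y) p‖ ^ 2 := by rw [Real.norm_eq_abs]
          _ ≤ ∑ i : ι, ‖(Φ x - Φ y) i‖ ^ 2 :=
              Finset.single_le_sum (f := fun i : ι => ‖(Φ x - Φ y) i‖ ^ 2)
                (fun i _ => by positivity) (Finset.mem_univ p)
      have h12 : 1 / c' ≤ 1 / 2 := by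
        apply div_le_div_of_nonneg_left (by norm_num) (by norm_num) hc'2
      rw [hnorm, hd]
      calc (1 / c') * κ (wrd x n) ≤ (1/2) * κ (wrd x n) := by
            apply mul_le_mul_of_nonneg_right h12 hκn.le
        _ ≤ ‖Φ x - Φ y‖ := hcoord.trans hle_norm
    · -- upper bound
      have hub : ∀ p : ι, ‖(Φ x - Φ y) p‖ ≤ 4 * c * κ (wrd x n) := by
        intro p
        rw [happly p, Real.norm_eq_abs]
        exact coordA x y n hagree p.1 p.2
      have hB : (0:ℝ) ≤ 4 * c * κ (wrd x n) := by positivity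
      have hnrm : ‖Φ x - Φ y‖ ≤ Real.sqrt (J * M) * (4 * c * κ (wrd x n)) := by
        rw [EuclideanSpace.norm_eq]
        have hsum2 : ∑ i : ι, ‖(Φ x - Φ y) i‖ ^ 2 ≤ (J * M) * (4 * c * κ (wrd x n)) ^ 2 := by
          calc ∑ i : ι, ‖(Φ x - Φ y) i‖ ^ 2
              ≤ ∑ _i : ι, (4 * c * κ (wrd x n)) ^ 2 := by
                apply Finset.sum_le_sum
                intro i _
                exact pow_le_pow_left₀ (norm_nonneg _) (hub i) 2
            _ = (J * M) * (4 * c * κ (wrd x n)) ^ 2 := by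
                have hcard : (Finset.univ : Finset ι).card = J * M := by
                  simp [ι, Fintype.card_prod]
                rw [Finset.sum_const, hcard, nsmul_eq_mul]
                push_cast
                ring
        calc Real.sqrt (∑ i : ι, ‖(Φ x - Φ y) i‖ ^ 2)
            ≤ Real.sqrt ((J * M) * (4 * c * κ (wrd x n)) ^ 2) := Real.sqrt_le_sqrt hsum2
          _ = Real.sqrt (J * M) * (4 * c * κ (wrd x n)) := by
              rw [Real.sqrt_mul (by positivity), Real.sqrt_sq hB]
      rw [hnorm, hd]
      calc ‖Φ x - Φ y‖ ≤ Real.sqrt (J * M) * (4 * c) * κ (wrd x n) := by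
            rw [mul_assoc]; exact hnrm
        _ ≤ c' * κ (wrd x n) := by
            apply mul_le_mul_of_nonneg_right (le_max_right _ _) hκn.le
end

section
/- Let M ≥ 2 be an integer and let κ be a weight on finite words over Fin M having geometric decay with constants c ≥ 1 and θ ∈ (0,1). Then for every natural number L satisfying θ^L < 1/(M·c + 1) there exist a constant c' ≥ 1 and a map φ : (Fin M)^ℕ → ℝ^L (Euclidean norm) such that (1/c')·d_κ(x,y) ≤ ‖φ(x) − φ(y)‖ ≤ c'·d_κ(x,y) for all x, y. In particular the smallest dimension of a bi-Lipschitz embedding of ((Fin M)^ℕ, d_κ) into a Euclidean space is at most ln(M·c + 1)/|ln θ| + 1. -/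
namespace MichonAux

variable {M : ℕ}

def word (x : ℕ → Fin M) (n : ℕ) : List (Fin M) := List.ofFn (fun i : Fin n => x i)

lemma word_length (x : ℕ → Fin M) (n : ℕ) : (word x n).length = n := List.length_ofFn

lemma word_succ (x : ℕ → Fin M) (n : ℕ) : word x (n+1) = word x n ++ [x n] := by
  have := List.ofFn_succ' (fun i : Fin (n+1) => x i)
  simpa [word, List.concat_eq_append] using this

lemma word_prefix (x : ℕ → Fin M) {n m : ℕ} (h : n ≤ m) : word x n <+: word x m := by
  induction m with
  | zero => simp_all
  | succ m ih =>
    rcases h.lt_or_eq with h' | h'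
    · exact (ih (Nat.lt_succ_iff.mp h')).trans
        (by rw [word_succ]; exact List.prefix_append _ _)
    · subst h'; exact List.prefix_rfl

lemma word_congr {x y : ℕ → Fin M} {n : ℕ} (h : ∀ i < n, x i = y i) :
    word x n = word y n := by
  unfold word; congr 1; funext i; exact h i i.2

noncomputable def Fx (κ : List (Fin M) → ℝ) (x : ℕ → Fin M) (m : ℕ) : ℝ :=
  κ (word x m) * ((x m : ℕ) : ℝ)

lemma Fx_nonneg {κ : List (Fin M) → ℝ} (hκ : IsWeight κ) (x : ℕ → Fin M) (m : ℕ) :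
    0 ≤ Fx κ x m := mul_nonneg (hκ.1 _).le (Nat.cast_nonneg _)

lemma val_le {x : ℕ → Fin M} (m : ℕ) : ((x m : ℕ) : ℝ) ≤ (M : ℝ) - 1 := by
  have h1 : (x m : ℕ) + 1 ≤ M := (x m).isLt
  have : ((x m : ℕ) : ℝ) + 1 ≤ (M : ℝ) := by exact_mod_cast h1
  linarith

lemma Fx_le {κ : List (Fin M) → ℝ} (hκ : IsWeight κ) {c θ : ℝ} (hc : 1 ≤ c)
    (hθ0 : 0 < θ) (hdec : GeomDecay κ c θ) (x : ℕ → Fin M) {n m : ℕ} (h : n ≤ m) :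
    Fx κ x m ≤ ((M : ℝ) - 1) * (c * θ ^ (m - n) * κ (word x n)) := by
  have h1 : κ (word x m) ≤ c * θ ^ (m - n) * κ (word x n) := by
    have := hdec (word x n) (word x m) (word_prefix x h)
    rwa [word_length, word_length] at this
  have h2 : ((x m : ℕ) : ℝ) ≤ (M : ℝ) - 1 := val_le m
  have h3 : 0 ≤ ((x m : ℕ) : ℝ) := Nat.cast_nonneg _
  calc Fx κ x m = κ (word x m) * ((x m : ℕ) : ℝ) := rfl
    _ ≤ (c * θ ^ (m - n) * κ (word x n)) * ((x m : ℕ) : ℝ) :=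
        mul_le_mul_of_nonneg_right h1 h3
    _ ≤ (c * θ ^ (m - n) * κ (word x n)) * ((M : ℝ) - 1) := by
        apply mul_le_mul_of_nonneg_left h2
        have h4 := (hκ.1 (word x n)).le
        have hθ : (0:ℝ) ≤ θ ^ (m - n) := by positivity
        positivity
    _ = ((M : ℝ) - 1) * (c * θ ^ (m - n) * κ (word x n)) := by ring


lemma Fx_global_le {κ : List (Fin M) → ℝ} (hκ : IsWeight κ) {c θ : ℝ} (hc : 1 ≤ c)
    (hθ0 : 0 < θ) (hdec : GeomDecay κ c θ) (x : ℕ → Fin M) (m : ℕ) :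
    Fx κ x m ≤ ((M : ℝ) - 1) * (c * θ ^ m * κ (word x 0)) := by
  simpa using Fx_le hκ hc hθ0 hdec x (Nat.zero_le m)

lemma summable_Fx {κ : List (Fin M) → ℝ} (hκ : IsWeight κ) {c θ : ℝ} (hc : 1 ≤ c)
    (hθ0 : 0 < θ) (hθ1 : θ < 1) (hdec : GeomDecay κ c θ) (x : ℕ → Fin M)
    {L : ℕ} (hL0 : 0 < L) (j : ℕ) :
    Summable (fun k : ℕ => Fx κ x (j + k * L)) := by
  have hθL1 : θ ^ L < 1 := pow_lt_one₀ hθ0.le hθ1 hL0.ne'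
  have hθL0 : (0:ℝ) ≤ θ ^ L := by positivity
  apply Summable.of_nonneg_of_le (fun k => Fx_nonneg hκ x _)
    (g := fun k => Fx κ x (j + k * L))
    (f := fun k => (((M : ℝ) - 1) * (c * κ (word x 0))) * (θ ^ L) ^ k)
  · intro k
    have h1 := Fx_global_le hκ hc hθ0 hdec x (j + k * L)
    have h2 : θ ^ (j + k * L) ≤ (θ ^ L) ^ k := by
      rw [← pow_mul]
      exact pow_le_pow_of_le_one hθ0.le hθ1.le (by nlinarith [Nat.zero_le j])
    have h3 : (0:ℝ) ≤ c * κ (word x 0) := by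
      have := (hκ.1 (word x 0)).le; positivity
    have hM1 : (0:ℝ) ≤ (M:ℝ) - 1 := by
      rcases Nat.eq_zero_or_pos M with h'|h'
      · exact absurd h' (by intro hh; exact absurd (x 0).isLt (by simp [hh]))
      · have : (1:ℝ) ≤ (M:ℝ) := by exact_mod_cast h'
        linarith
    calc Fx κ x (j + k * L) ≤ ((M : ℝ) - 1) * (c * θ ^ (j + k*L) * κ (word x 0)) := h1
      _ = (((M : ℝ) - 1) * (c * κ (word x 0))) * θ ^ (j + k*L) := by ring
      _ ≤ (((M : ℝ) - 1) * (c * κ (word x 0))) * (θ ^ L) ^ k := by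
          apply mul_le_mul_of_nonneg_left h2; positivity
  · exact (summable_geometric_of_lt_one hθL0 hθL1).mul_left _

noncomputable def phi (κ : List (Fin M) → ℝ) (L : ℕ) (x : ℕ → Fin M) :
    EuclideanSpace ℝ (Fin L) := WithLp.toLp 2 (fun j : Fin L => ∑' k : ℕ, Fx κ x (j.1 + k * L))


lemma dist_bounds {κ : List (Fin M) → ℝ} (hM : 2 ≤ M) (hκ : IsWeight κ) {c θ : ℝ}
    (hc : 1 ≤ c) (hθ0 : 0 < θ) (hθ1 : θ < 1) (hdec : GeomDecay κ c θ)
    {L : ℕ} (hL0 : 0 < L) (hθL : θ ^ L < 1 / (M * c + 1)) (x y : ℕ → Fin M) :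
    (1 / (M:ℝ)) * dkappa κ x y ≤ ‖phi κ L x - phi κ L y‖ ∧
    ‖phi κ L x - phi κ L y‖ ≤ ((L:ℝ) * ((M:ℝ)-1) * c * (1 - θ^L)⁻¹) * dkappa κ x y := by
  have hθL1 : θ ^ L < 1 := pow_lt_one₀ hθ0.le hθ1 hL0.ne'
  have hθLpos : (0:ℝ) < θ ^ L := pow_pos hθ0 L
  have hSpos : (0:ℝ) < (1 - θ^L)⁻¹ := inv_pos.mpr (by linarith)
  have hM2 : (2:ℝ) ≤ (M:ℝ) := by exact_mod_cast hM
  have hM0 : (0:ℝ) < (M:ℝ) := by linarith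
  by_cases hxy : x = y
  · subst hxy
    simp [dkappa, sub_self]
  -- basic data
  have hd : dkappa κ x y = κ (word x (Nat.find (Function.ne_iff.mp hxy))) := by
    rw [dkappa, dif_neg hxy]; rfl
  set n := Nat.find (Function.ne_iff.mp hxy) with hn
  set d := κ (word x n) with hdd
  have hd0 : (0:ℝ) < d := hκ.1 _
  have hfind : x n ≠ y n := Nat.find_spec (Function.ne_iff.mp hxy)
  have hmin : ∀ i < n, x i = y i := fun i hi => not_not.mp (Nat.find_min _ hi)
  have hword : ∀ m ≤ n, word x m = word y m := fun m hm =>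
    word_congr (fun i hi => hmin i (lt_of_lt_of_le hi hm))
  have hFeq : ∀ m < n, Fx κ x m = Fx κ y m := by
    intro m hm; unfold Fx; rw [hword m hm.le, hmin m hm]
  have hB : ∀ m, n ≤ m → |Fx κ x m - Fx κ y m| ≤ ((M:ℝ)-1) * (c * θ^(m-n) * d) := by
    intro m hm
    have h1 := Fx_le hκ hc hθ0 hdec x hm
    have h2 := Fx_le hκ hc hθ0 hdec y hm
    rw [← hword n le_rfl] at h2
    have g1 := Fx_nonneg hκ x m
    have g2 := Fx_nonneg hκ y m
    rw [abs_sub_le_iff]; constructor <;> [skip; skip] <;>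
      [linarith [h1, g2]; linarith [h2, g1]]
  have hsx : ∀ j : ℕ, Summable (fun k => Fx κ x (j + k*L)) :=
    fun j => summable_Fx hκ hc hθ0 hθ1 hdec x hL0 j
  have hsy : ∀ j : ℕ, Summable (fun k => Fx κ y (j + k*L)) :=
    fun j => summable_Fx hκ hc hθ0 hθ1 hdec y hL0 j
  have hsub : ∀ j : ℕ, Summable (fun k => Fx κ x (j + k*L) - Fx κ y (j + k*L)) :=
    fun j => (hsx j).sub (hsy j)
  have habs : ∀ j : ℕ, Summable (fun k => |Fx κ x (j + k*L) - Fx κ y (j + k*L)|) :=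
    fun j => (hsub j).abs
  have happ : ∀ j : Fin L, (phi κ L x - phi κ L y) j
      = ∑' k : ℕ, (Fx κ x (j.1 + k*L) - Fx κ y (j.1 + k*L)) := by
    intro j
    have h0 : (phi κ L x - phi κ L y) j = phi κ L x j - phi κ L y j := rfl
    rw [h0]
    exact (Summable.tsum_sub (hsx j.1) (hsy j.1)).symm
  -- tail estimate
  have htail : ∀ (j k0 : ℕ), n ≤ j + k0*L →
      (∑' t : ℕ, |Fx κ x (j + (t+k0)*L) - Fx κ y (j + (t+k0)*L)|)
        ≤ ((M:ℝ)-1) * c * d * θ^(j + k0*L - n) * (1 - θ^L)⁻¹ := by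
    intro j k0 hk0
    have hsum1 : Summable (fun t : ℕ => |Fx κ x (j + (t+k0)*L) - Fx κ y (j + (t+k0)*L)|) := by
      have := (summable_nat_add_iff (f := fun k => |Fx κ x (j + k*L) - Fx κ y (j + k*L)|) k0).mpr
        (habs j)
      simpa using this
    have hbound : ∀ t : ℕ, |Fx κ x (j + (t+k0)*L) - Fx κ y (j + (t+k0)*L)|
        ≤ (((M:ℝ)-1) * c * d * θ^(j + k0*L - n)) * (θ^L)^t := by
      intro t
      have hm : n ≤ j + (t+k0)*L := by
        refine hk0.trans ?_
        have : k0*L ≤ (t+k0)*L := Nat.mul_le_mul_right L (Nat.le_add_left _ _)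
        omega
      have he : j + (t+k0)*L - n = (j + k0*L - n) + t*L := by
        have e1 : j + (t+k0)*L = (j + k0*L) + t*L := by ring
        rw [e1, Nat.sub_add_comm hk0]
      calc |Fx κ x (j + (t+k0)*L) - Fx κ y (j + (t+k0)*L)|
          ≤ ((M:ℝ)-1) * (c * θ^(j + (t+k0)*L - n) * d) := hB _ hm
        _ = (((M:ℝ)-1) * c * d * θ^(j + k0*L - n)) * (θ^L)^t := by
            rw [he, pow_add, mul_comm t L, pow_mul]; ring
    calc (∑' t : ℕ, |Fx κ x (j + (t+k0)*L) - Fx κ y (j + (t+k0)*L)|)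
        ≤ ∑' t : ℕ, (((M:ℝ)-1) * c * d * θ^(j + k0*L - n)) * (θ^L)^t :=
          Summable.tsum_le_tsum hbound hsum1
            ((summable_geometric_of_lt_one hθLpos.le hθL1).mul_left _)
      _ = (((M:ℝ)-1) * c * d * θ^(j + k0*L - n)) * (1 - θ^L)⁻¹ := by
          rw [tsum_mul_left, tsum_geometric_of_lt_one hθLpos.le hθL1]
  -- uniform coordinate upper bound
  have hcoordU : ∀ j : Fin L, |(phi κ L x - phi κ L y) j|
      ≤ ((M:ℝ)-1) * c * d * (1 - θ^L)⁻¹ := by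
    intro j
    rw [happ j]
    have hex : ∃ k, n ≤ j.1 + k*L := ⟨n, by
      have : n * 1 ≤ n * L := Nat.mul_le_mul_left n hL0
      omega⟩
    set kj := Nat.find hex with hkjdef
    have hkj : n ≤ j.1 + kj*L := Nat.find_spec hex
    have hzero : ∀ k < kj, Fx κ x (j.1 + k*L) - Fx κ y (j.1 + k*L) = 0 := by
      intro k hk
      have h1 : ¬ n ≤ j.1 + k*L := Nat.find_min hex hk
      rw [hFeq _ (Nat.not_le.mp h1), sub_self]
    have h1 : |∑' k : ℕ, (Fx κ x (j.1 + k*L) - Fx κ y (j.1 + k*L))|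
        ≤ ∑' k : ℕ, |Fx κ x (j.1 + k*L) - Fx κ y (j.1 + k*L)| := by
      simpa [Real.norm_eq_abs] using
        norm_tsum_le_tsum_norm (f := fun k : ℕ => Fx κ x (j.1 + k*L) - Fx κ y (j.1 + k*L))
          (by simpa [Real.norm_eq_abs] using habs j.1)
    have h2 : (∑' k : ℕ, |Fx κ x (j.1 + k*L) - Fx κ y (j.1 + k*L)|)
        = ∑' t : ℕ, |Fx κ x (j.1 + (t+kj)*L) - Fx κ y (j.1 + (t+kj)*L)| := by
      rw [← Summable.sum_add_tsum_nat_add kj (habs j.1)]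
      rw [Finset.sum_eq_zero (fun k hk => by
        rw [hzero k (Finset.mem_range.mp hk)]; simp), zero_add]
    have h3 := htail j.1 kj hkj
    have h4 : θ^(j.1 + kj*L - n) ≤ 1 := pow_le_one₀ hθ0.le hθ1.le
    have h5 : (0:ℝ) ≤ ((M:ℝ)-1) * c * d :=
      mul_nonneg (mul_nonneg (by linarith) (by linarith)) hd0.le
    calc |∑' k : ℕ, (Fx κ x (j.1 + k*L) - Fx κ y (j.1 + k*L))|
        ≤ ∑' k : ℕ, |Fx κ x (j.1 + k*L) - Fx κ y (j.1 + k*L)| := h1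
      _ = ∑' t : ℕ, |Fx κ x (j.1 + (t+kj)*L) - Fx κ y (j.1 + (t+kj)*L)| := h2
      _ ≤ ((M:ℝ)-1) * c * d * θ^(j.1 + kj*L - n) * (1 - θ^L)⁻¹ := h3
      _ ≤ ((M:ℝ)-1) * c * d * (1 - θ^L)⁻¹ := by
          have := mul_le_mul_of_nonneg_right
            (mul_le_of_le_one_right h5 h4) hSpos.le
          linarith
  -- the distinguished coordinate
  have hj0 : n % L < L := Nat.mod_lt n hL0
  have hnk : n % L + (n / L) * L = n := by
    rw [mul_comm]; exact Nat.mod_add_div n L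
  have hlow : (1 / (M:ℝ)) * d ≤ |(phi κ L x - phi κ L y) ⟨n % L, hj0⟩| := by
    rw [happ ⟨n % L, hj0⟩]
    have hsplit : (∑' k : ℕ, (Fx κ x (n % L + k*L) - Fx κ y (n % L + k*L)))
        = (Fx κ x n - Fx κ y n)
          + ∑' t : ℕ, (Fx κ x (n % L + (t + (n/L + 1))*L) - Fx κ y (n % L + (t + (n/L + 1))*L)) := by
      rw [← Summable.sum_add_tsum_nat_add (n/L + 1) (hsub (n % L))]
      congr 1
      rw [Finset.sum_range_succ]
      rw [Finset.sum_eq_zero (fun k hk => by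
          have hk' : k < n / L := Finset.mem_range.mp hk
          have : n % L + k*L < n := by
            have : k*L < (n/L)*L := (Nat.mul_lt_mul_right hL0).mpr hk'
            omega
          rw [hFeq _ this, sub_self]), zero_add, hnk]
    have hmain : |Fx κ x n - Fx κ y n| ≥ d := by
      have hwn : word y n = word x n := (hword n le_rfl).symm
      have hxyv : ((x n : ℕ) : ℝ) ≠ ((y n : ℕ) : ℝ) := by
        simp only [ne_eq, Nat.cast_inj]
        exact fun h => hfind (Fin.ext h)
      have h1 : Fx κ x n - Fx κ y n = d * (((x n : ℕ) : ℝ) - ((y n : ℕ) : ℝ)) := by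
        unfold Fx; rw [hwn, ← hdd]; ring
      have h2 : (1:ℝ) ≤ |((x n : ℕ) : ℝ) - ((y n : ℕ) : ℝ)| := by
        have hne : ((x n : ℕ) : ℤ) - ((y n : ℕ) : ℤ) ≠ 0 := by
          intro h
          apply hxyv
          have : ((x n : ℕ) : ℤ) = ((y n : ℕ) : ℤ) := by omega
          exact_mod_cast this
        have := Int.one_le_abs hne
        have h3 : ((1:ℤ):ℝ) ≤ ((|((x n : ℕ) : ℤ) - ((y n : ℕ) : ℤ)| : ℤ) : ℝ) := by
          exact_mod_cast this
        rw [Int.cast_abs] at h3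
        push_cast at h3
        convert h3 using 2
      rw [h1, abs_mul, abs_of_pos hd0]
      nlinarith
    have htl : |∑' t : ℕ, (Fx κ x (n % L + (t + (n/L + 1))*L) - Fx κ y (n % L + (t + (n/L + 1))*L))|
        ≤ ((M:ℝ)-1) * c * d * θ^L * (1 - θ^L)⁻¹ := by
      have hk0 : n ≤ n % L + (n/L + 1)*L := by
        have : (n/L + 1)*L = (n/L)*L + L := by ring
        omega
      have hexp : n % L + (n/L + 1)*L - n = L := by
        have : (n/L + 1)*L = (n/L)*L + L := by ring
        omega
      have h1 : |∑' t : ℕ, (Fx κ x (n % L + (t + (n/L + 1))*L) - Fx κ y (n % L + (t + (n/L + 1))*L))|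
          ≤ ∑' t : ℕ, |Fx κ x (n % L + (t + (n/L + 1))*L) - Fx κ y (n % L + (t + (n/L + 1))*L)| := by
        have hsum1 : Summable (fun t : ℕ => |Fx κ x (n % L + (t + (n/L + 1))*L) - Fx κ y (n % L + (t + (n/L + 1))*L)|) := by
          have := (summable_nat_add_iff
            (f := fun k => |Fx κ x (n % L + k*L) - Fx κ y (n % L + k*L)|) (n/L + 1)).mpr
            (habs (n % L))
          simpa using this
        simpa [Real.norm_eq_abs] using
          norm_tsum_le_tsum_norm
            (f := fun t : ℕ => Fx κ x (n % L + (t + (n/L + 1))*L) - Fx κ y (n % L + (t + (n/L + 1))*L))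
            (by simpa [Real.norm_eq_abs] using hsum1)
      have h2 := htail (n % L) (n/L + 1) hk0
      rw [hexp] at h2
      exact h1.trans h2
    -- numeric estimate
    have hkey : θ^L * ((M:ℝ) * c + 1) < 1 := by
      have hpos : (0:ℝ) < (M:ℝ) * c + 1 := by nlinarith
      exact (lt_div_iff₀ hpos).mp hθL
    have hnum : ((M:ℝ)-1) * c * d * θ^L * (1 - θ^L)⁻¹ ≤ d - (1 / (M:ℝ)) * d := by
      have hb : (1 - θ^L)⁻¹ * (1 - θ^L) = 1 := inv_mul_cancel₀ (by linarith)
      have hMc : (0:ℝ) < (M:ℝ) * c := by nlinarith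
      have hab : θ^L * (1 - θ^L)⁻¹ ≤ ((M:ℝ) * c)⁻¹ := by
        rw [← div_eq_mul_inv, ← one_div ((M:ℝ)*c), div_le_div_iff₀ (by linarith) hMc]
        nlinarith
      have hfin : ((M:ℝ)-1) * c * d * (θ^L * (1 - θ^L)⁻¹) ≤ ((M:ℝ)-1) * c * d * ((M:ℝ)*c)⁻¹ := by
        exact mul_le_mul_of_nonneg_left hab
          (mul_nonneg (mul_nonneg (by linarith) (by linarith)) hd0.le)
      have heq : ((M:ℝ)-1) * c * d * ((M:ℝ)*c)⁻¹ = d - (1 / (M:ℝ)) * d := by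
        field_simp
      calc ((M:ℝ)-1) * c * d * θ^L * (1 - θ^L)⁻¹
          = ((M:ℝ)-1) * c * d * (θ^L * (1 - θ^L)⁻¹) := by ring
        _ ≤ ((M:ℝ)-1) * c * d * ((M:ℝ)*c)⁻¹ := hfin
        _ = d - (1 / (M:ℝ)) * d := heq
    rw [hsplit]
    calc (1 / (M:ℝ)) * d ≤ |Fx κ x n - Fx κ y n|
          - |∑' t : ℕ, (Fx κ x (n % L + (t + (n/L + 1))*L) - Fx κ y (n % L + (t + (n/L + 1))*L))| := by
          linarith
      _ ≤ |(Fx κ x n - Fx κ y n)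
          + ∑' t : ℕ, (Fx κ x (n % L + (t + (n/L + 1))*L) - Fx κ y (n % L + (t + (n/L + 1))*L))| := by
          have := abs_add_le (Fx κ x n - Fx κ y n
              + ∑' t : ℕ, (Fx κ x (n % L + (t + (n/L + 1))*L) - Fx κ y (n % L + (t + (n/L + 1))*L)))
            (-(∑' t : ℕ, (Fx κ x (n % L + (t + (n/L + 1))*L) - Fx κ y (n % L + (t + (n/L + 1))*L))))
          simp only [add_neg_cancel_right, abs_neg] at this
          linarith
  -- conclusion via Euclidean norm
  constructor
  · rw [hd]
    have h1 : |(phi κ L x - phi κ L y) ⟨n % L, hj0⟩| ≤ ‖phi κ L x - phi κ L y‖ := by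
      rw [EuclideanSpace.norm_eq]
      have h2 : |(phi κ L x - phi κ L y) ⟨n % L, hj0⟩|
          = Real.sqrt (‖(phi κ L x - phi κ L y) ⟨n % L, hj0⟩‖^2) := by
        rw [Real.sqrt_sq_eq_abs, Real.norm_eq_abs, abs_abs]
      rw [h2]
      apply Real.sqrt_le_sqrt
      exact Finset.single_le_sum (f := fun i => ‖(phi κ L x - phi κ L y) i‖^2)
        (fun i _ => by positivity) (Finset.mem_univ _)
    exact hlow.trans h1
  · rw [hd]
    have h1 : ‖phi κ L x - phi κ L y‖ ≤ ∑ j : Fin L, ‖(phi κ L x - phi κ L y) j‖ := by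
      rw [EuclideanSpace.norm_eq]
      have h2 : (∑ j : Fin L, ‖(phi κ L x - phi κ L y) j‖^2)
          ≤ (∑ j : Fin L, ‖(phi κ L x - phi κ L y) j‖)^2 :=
        Finset.sum_sq_le_sq_sum_of_nonneg (fun i _ => norm_nonneg _)
      calc Real.sqrt (∑ j : Fin L, ‖(phi κ L x - phi κ L y) j‖^2)
          ≤ Real.sqrt ((∑ j : Fin L, ‖(phi κ L x - phi κ L y) j‖)^2) := Real.sqrt_le_sqrt h2
        _ = ∑ j : Fin L, ‖(phi κ L x - phi κ L y) j‖ :=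
            Real.sqrt_sq (Finset.sum_nonneg (fun i _ => norm_nonneg _))
    have h3 : (∑ j : Fin L, ‖(phi κ L x - phi κ L y) j‖)
        ≤ (L:ℝ) * (((M:ℝ)-1) * c * d * (1 - θ^L)⁻¹) := by
      have := Finset.sum_le_card_nsmul Finset.univ (fun j : Fin L => ‖(phi κ L x - phi κ L y) j‖)
        (((M:ℝ)-1) * c * d * (1 - θ^L)⁻¹)
        (fun j _ => by simpa [Real.norm_eq_abs] using hcoordU j)
      simpa [Finset.card_univ, nsmul_eq_mul] using this
    calc ‖phi κ L x - phi κ L y‖ ≤ ∑ j : Fin L, ‖(phi κ L x - phi κ L y) j‖ := h1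
      _ ≤ (L:ℝ) * (((M:ℝ)-1) * c * d * (1 - θ^L)⁻¹) := h3
      _ = ((L:ℝ) * ((M:ℝ)-1) * c * (1 - θ^L)⁻¹) * d := by ring


lemma dkappa_nonneg {κ : List (Fin M) → ℝ} (hκ : IsWeight κ) (x y : ℕ → Fin M) :
    0 ≤ dkappa κ x y := by
  unfold dkappa; split
  · exact le_refl 0
  · exact (hκ.1 _).le

end MichonAux

/-- Quantitative embedding: for every `L` with `θ^L < 1/(M·c+1)` there is a
bi-Lipschitz map `(Fin M)^ℕ → ℝ^L`; in particular the smallest embedding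
dimension is at most `ln(M·c+1)/|ln θ| + 1`. -/
theorem fEmbeddable_dimension_bound {M : ℕ} (hM : 2 ≤ M)
    (κ : List (Fin M) → ℝ) (hκ : IsWeight κ)
    (c θ : ℝ) (hc : 1 ≤ c) (hθ0 : 0 < θ) (hθ1 : θ < 1)
    (hdec : GeomDecay κ c θ) :
    (∀ L : ℕ, θ ^ L < 1 / (M * c + 1) →
      ∃ (c' : ℝ) (φ : (ℕ → Fin M) → EuclideanSpace ℝ (Fin L)),
        1 ≤ c' ∧ ∀ x y : ℕ → Fin M,
          (1 / c') * dkappa κ x y ≤ ‖φ x - φ y‖ ∧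
          ‖φ x - φ y‖ ≤ c' * dkappa κ x y) ∧
    (∃ L : ℕ, (L : ℝ) ≤ Real.log (M * c + 1) / |Real.log θ| + 1 ∧
      ∃ (c' : ℝ) (φ : (ℕ → Fin M) → EuclideanSpace ℝ (Fin L)),
        1 ≤ c' ∧ ∀ x y : ℕ → Fin M,
          (1 / c') * dkappa κ x y ≤ ‖φ x - φ y‖ ∧
          ‖φ x - φ y‖ ≤ c' * dkappa κ x y) := by
  have hM2 : (2:ℝ) ≤ (M:ℝ) := by exact_mod_cast hM
  have hMc1 : (0:ℝ) < (M:ℝ) * c + 1 := by nlinarith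
  have main : ∀ L : ℕ, θ ^ L < 1 / (M * c + 1) →
      ∃ (c' : ℝ) (φ : (ℕ → Fin M) → EuclideanSpace ℝ (Fin L)),
        1 ≤ c' ∧ ∀ x y : ℕ → Fin M,
          (1 / c') * dkappa κ x y ≤ ‖φ x - φ y‖ ∧
          ‖φ x - φ y‖ ≤ c' * dkappa κ x y := by
    intro L hL
    have hL0 : 0 < L := by
      rcases Nat.eq_zero_or_pos L with h | h
      · exfalso
        rw [h, pow_zero] at hL
        have : 1 / ((M:ℝ) * c + 1) ≤ 1 := by
          rw [div_le_one hMc1]; nlinarith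
        linarith
      · exact h
    have hθL1 : θ ^ L < 1 := pow_lt_one₀ hθ0.le hθ1 hL0.ne'
    have hSpos : (0:ℝ) < (1 - θ^L)⁻¹ := inv_pos.mpr (by linarith)
    set c' : ℝ := (M:ℝ) + (L:ℝ) * ((M:ℝ)-1) * c * (1 - θ^L)⁻¹ with hc'
    have hrest : (0:ℝ) ≤ (L:ℝ) * ((M:ℝ)-1) * c * (1 - θ^L)⁻¹ := by
      apply mul_nonneg (mul_nonneg (mul_nonneg (Nat.cast_nonneg L) (by linarith)) (by linarith))
        hSpos.le
    have hc'M : (M:ℝ) ≤ c' := by rw [hc']; linarith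
    have hc'1 : (1:ℝ) ≤ c' := by linarith
    refine ⟨c', MichonAux.phi κ L, hc'1, fun x y => ?_⟩
    obtain ⟨hl, hu⟩ := MichonAux.dist_bounds hM hκ hc hθ0 hθ1 hdec hL0 hL x y
    have hd0 : 0 ≤ dkappa κ x y := MichonAux.dkappa_nonneg hκ x y
    constructor
    · refine le_trans ?_ hl
      apply mul_le_mul_of_nonneg_right _ hd0
      exact one_div_le_one_div_of_le (by linarith) hc'M
    · refine hu.trans ?_
      apply mul_le_mul_of_nonneg_right _ hd0
      rw [hc']; linarith
  refine ⟨main, ?_⟩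
  set r : ℝ := Real.log ((M:ℝ) * c + 1) / |Real.log θ| with hr
  have hlogθ : Real.log θ < 0 := Real.log_neg hθ0 hθ1
  have habsθ : |Real.log θ| = -Real.log θ := abs_of_neg hlogθ
  have habsθ0 : (0:ℝ) < |Real.log θ| := by rw [habsθ]; linarith
  have hlogMc : (0:ℝ) ≤ Real.log ((M:ℝ) * c + 1) := Real.log_nonneg (by nlinarith)
  have hr0 : 0 ≤ r := div_nonneg hlogMc habsθ0.le
  refine ⟨⌊r⌋₊ + 1, ?_, ?_⟩
  · push_cast
    have := Nat.floor_le hr0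
    linarith
  · apply main
    have hrL : r < ((⌊r⌋₊ + 1 : ℕ) : ℝ) := by
      push_cast
      exact Nat.lt_floor_add_one r
    set L : ℕ := ⌊r⌋₊ + 1
    have h1 : Real.log ((M:ℝ) * c + 1) < (L:ℝ) * |Real.log θ| := by
      have := mul_lt_mul_of_pos_right hrL habsθ0
      rwa [hr, div_mul_cancel₀ _ habsθ0.ne'] at this
    have h2 : (L:ℝ) * Real.log θ < Real.log (((M:ℝ) * c + 1)⁻¹) := by
      rw [Real.log_inv]
      rw [habsθ] at h1
      linarith
    have e1 : θ ^ L = Real.exp ((L:ℝ) * Real.log θ) := by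
      rw [← Real.log_pow, Real.exp_log (pow_pos hθ0 L)]
    have e2 : (((M:ℝ) * c + 1))⁻¹ = Real.exp (Real.log (((M:ℝ) * c + 1)⁻¹)) :=
      (Real.exp_log (inv_pos.mpr hMc1)).symm
    rw [one_div, e2, e1]
    exact Real.exp_lt_exp.mpr h2
end

section
/- Let k ≥ 1 and let x : ℤ → Fin k be linearly repetitive: there exists a constant K > 1 such that for every n ≥ 1, every word of length n occurring in x occurs as a factor of every word of length ⌈K·n⌉ occurring in x. Let Ξ(x) ⊆ (Fin k)^ℤ be the closure, for the product topology, of the shift-orbit {m ↦ x(m+j) : j ∈ ℤ} of x, equipped with the combinatorial metric D. Then (Ξ(x), D) is f-embeddable: there exist L ∈ ℕ, c ≥ 1 and φ : Ξ(x) → ℝ^L with (1/c)·D(y,z) ≤ ‖φ(y) − φ(z)‖ ≤ c·D(y,z) for all y, z ∈ Ξ(x). -/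
-- The combinatorial metric on `A^ℤ`: `D(y,y) = 0`, and for `y ≠ z`,
-- `D(y,z) = 1/(N+1)` where `N = min{|n| : y(n) ≠ z(n)}`.
open Classical in
noncomputable def combDist {A : Type*} (y z : ℤ → A) : ℝ :=
  if h : y = z then 0
  else
    have hex : ∃ N : ℕ, y (N : ℤ) ≠ z (N : ℤ) ∨ y (-(N : ℤ)) ≠ z (-(N : ℤ)) := by
      obtain ⟨n, hn⟩ := Function.ne_iff.mp h
      refine ⟨n.natAbs, ?_⟩
      rcases Int.natAbs_eq n with h1 | h1
      · exact Or.inl (by rwa [← h1])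
      · exact Or.inr (by rwa [← h1])
    1 / ((Nat.find hex : ℝ) + 1)

/-- The shift orbit of a two-sided sequence. -/
def shiftOrbit {A : Type*} (x : ℤ → A) : Set (ℤ → A) :=
  {y | ∃ j : ℤ, y = fun m => x (m + j)}

/-- A subset `Ξ` of `A^ℤ`, with the combinatorial metric, is f-embeddable if
there is a bi-Lipschitz map from `Ξ` into some finite-dimensional Euclidean
space. -/
def FEmbeddableSubshift {A : Type*} (Ξ : Set (ℤ → A)) : Prop :=
  ∃ (L : ℕ) (c : ℝ) (φ : Ξ → EuclideanSpace ℝ (Fin L)),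
    1 ≤ c ∧ ∀ y z : Ξ,
      (1 / c) * combDist (y : ℤ → A) (z : ℤ → A) ≤ ‖φ y - φ z‖ ∧
      ‖φ y - φ z‖ ≤ c * combDist (y : ℤ → A) (z : ℤ → A)

/-- A finite word `w` occurs in a two-sided sequence `y`. -/
def occursIn {A : Type*} (w : List A) (y : ℤ → A) : Prop :=
  ∃ i : ℤ, ∀ j : Fin w.length, y (i + (j : ℕ)) = w.get j

/-- Linear repetitivity: there is `K > 1` such that every word of length `n ≥ 1`
occurring in `x` occurs as a factor of every word of length `⌈K·n⌉` occurring
in `x`. -/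
def LinearlyRepetitive {A : Type*} (x : ℤ → A) : Prop :=
  ∃ K : ℝ, 1 < K ∧ ∀ n : ℕ, 1 ≤ n → ∀ u v : List A,
    u.length = n → v.length = ⌈K * n⌉₊ → occursIn u x → occursIn v x → u <:+: v

namespace LRwork

variable {k : ℕ}

def occF (x : ℤ → Fin k) {m : ℕ} (w : Fin m → Fin k) : Prop :=
  ∃ i : ℤ, ∀ j : Fin m, x (i + (j : ℕ)) = w j

def wAt (x : ℤ → Fin k) (m : ℕ) (i : ℤ) : Fin m → Fin k := fun j => x (i + (j : ℕ))

lemma occF_wAt (x : ℤ → Fin k) (m : ℕ) (i : ℤ) : occF x (wAt x m i) := ⟨i, fun _ => rfl⟩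

lemma combDist_self {A : Type*} {y z : ℤ → A} (h : y = z) : combDist y z = 0 := by
  simp [combDist, h]

lemma combDist_spec {A : Type*} {y z : ℤ → A} (h : y ≠ z) :
    ∃ N : ℕ, (y (N:ℤ) ≠ z (N:ℤ) ∨ y (-(N:ℤ)) ≠ z (-(N:ℤ))) ∧
      (∀ n : ℕ, n < N → (y (n:ℤ) = z (n:ℤ) ∧ y (-(n:ℤ)) = z (-(n:ℤ)))) ∧
      combDist y z = 1/((N:ℝ)+1) := by
  classical
  rw [combDist, dif_neg h]
  refine ⟨_, ?_, fun n hn => ?_, rfl⟩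
  · exact Nat.find_spec (p := fun N : ℕ => y (N:ℤ) ≠ z (N:ℤ) ∨ y (-(N:ℤ)) ≠ z (-(N:ℤ))) _
  · have := Nat.find_min _ hn
    push_neg at this
    exact this

lemma occursIn_ofFn {x : ℤ → Fin k} {m : ℕ} {w : Fin m → Fin k} (h : occF x w) :
    occursIn (List.ofFn w) x := by
  obtain ⟨i, hi⟩ := h
  refine ⟨i, fun j => ?_⟩
  rw [List.get_ofFn]
  have := hi (Fin.cast (List.length_ofFn (f := w)) j)
  simpa using this

lemma lr_window {x : ℤ → Fin k} {K : ℝ}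
    (hLR : ∀ n : ℕ, 1 ≤ n → ∀ u v : List (Fin k), u.length = n → v.length = ⌈K * n⌉₊ →
      occursIn u x → occursIn v x → u <:+: v)
    {m : ℕ} (hm : 1 ≤ m) {w : Fin m → Fin k} (hw : occF x w) (i0 : ℤ) :
    ∃ s : ℕ, s + m ≤ ⌈K * m⌉₊ ∧ ∀ j : Fin m, x (i0 + (s : ℕ) + (j : ℕ)) = w j := by
  classical
  set N := ⌈K * (m:ℝ)⌉₊ with hN
  have hul : (List.ofFn w).length = m := by simp
  have hvl : (List.ofFn (fun j : Fin N => x (i0 + (j : ℕ)))).length = N := by simp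
  have hou : occursIn (List.ofFn w) x := occursIn_ofFn hw
  have hov : occursIn (List.ofFn (fun j : Fin N => x (i0 + (j : ℕ)))) x :=
    occursIn_ofFn (occF_wAt x N i0)
  have hinf := hLR m hm _ _ hul hvl hou hov
  obtain ⟨s, t, hst⟩ := hinf
  have hlen : s.length + (m + t.length) = N := by
    have := congrArg List.length hst
    simpa [hul, hvl, List.length_append, add_assoc] using this
  refine ⟨s.length, by omega, fun j => ?_⟩
  have hgl : s.length + (j:ℕ) < (s ++ List.ofFn w ++ t).length := by
    rw [hst, hvl]; omega
  have e1 : (s ++ List.ofFn w ++ t)[s.length + (j:ℕ)]'hgl = w j := by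
    rw [List.getElem_append_left (by rw [List.length_append, hul]; omega :
        s.length + (j:ℕ) < (s ++ List.ofFn w).length)]
    rw [List.getElem_append_right (by omega : s.length ≤ s.length + (j:ℕ))]
    have h3 : s.length + (j:ℕ) - s.length = (j:ℕ) := by omega
    simp only [h3, List.getElem_ofFn, Fin.eta]
  have e2 : (s ++ List.ofFn w ++ t)[s.length + (j:ℕ)]'hgl
      = x (i0 + ((s.length + (j:ℕ) : ℕ) : ℤ)) := by
    rw [List.getElem_of_eq hst hgl]
    rw [List.getElem_ofFn]
  rw [← e1, e2]
  push_cast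
  ring_nf

lemma closure_window {x y : ℤ → Fin k}
    (hy : y ∈ closure (shiftOrbit x)) (a : ℤ) (m : ℕ) :
    occF x (fun j : Fin m => y (a + (j : ℕ))) := by
  have hopen : IsOpen {z : ℤ → Fin k | ∀ j : Fin m, z (a + (j:ℕ)) = y (a + (j:ℕ))} := by
    have he : {z : ℤ → Fin k | ∀ j : Fin m, z (a + (j:ℕ)) = y (a + (j:ℕ))} =
        ⋂ j : Fin m, (fun z : ℤ → Fin k => z (a + (j:ℕ))) ⁻¹' {y (a + (j:ℕ))} := by
      ext z; simp
    rw [he]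
    exact isOpen_iInter_of_finite fun j =>
      (continuous_apply _).isOpen_preimage _ (isOpen_discrete _)
  have hne := mem_closure_iff.mp hy _ hopen (fun j => rfl)
  obtain ⟨z, hz1, j0, hz2⟩ := hne
  refine ⟨a + j0, fun j => ?_⟩
  have := hz1 j
  rw [hz2] at this
  simp only at this
  rw [show a + j0 + (j:ℕ) = a + (j:ℕ) + j0 by ring]
  exact this

end LRwork

namespace LRwork

variable {k : ℕ}

def HasLowComplexity (x : ℤ → Fin k) : Prop :=
  ∃ d : ℕ, 1 ≤ d ∧ ∃ g : (Fin d → Fin k) → Fin d,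
    ∀ w1 w2 : Fin d → Fin k, occF x w1 → occF x w2 → g w1 = g w2 → w1 = w2

open Classical in
noncomputable def pcomp (x : ℤ → Fin k) (n : ℕ) : ℕ :=
  (Finset.univ.filter (fun w : Fin n → Fin k => occF x w)).card

open Classical in
lemma mem_pfilter {x : ℤ → Fin k} {n : ℕ} {w : Fin n → Fin k} :
    w ∈ (Finset.univ.filter (fun w : Fin n → Fin k => occF x w)) ↔ occF x w := by
  simp

/-- restriction of an (n+1)-window to its first n letters -/
def res (n : ℕ) (w : Fin (n+1) → Fin k) : Fin n → Fin k := fun j => w j.castSucc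

open Classical in
lemma res_image (x : ℤ → Fin k) (n : ℕ) :
    (Finset.univ.filter (fun w : Fin (n+1) → Fin k => occF x w)).image (res n)
      = Finset.univ.filter (fun w : Fin n → Fin k => occF x w) := by
  ext u
  simp only [Finset.mem_image, mem_pfilter]
  constructor
  · rintro ⟨w, hw, rfl⟩
    obtain ⟨i, hi⟩ := hw
    exact ⟨i, fun j => by simpa [res] using hi j.castSucc⟩
  · rintro ⟨i, hi⟩
    refine ⟨wAt x (n+1) i, occF_wAt x (n+1) i, ?_⟩
    funext j
    have := hi j
    simpa [res, wAt] using this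

lemma pcomp_mono (x : ℤ → Fin k) (n : ℕ) : pcomp x n ≤ pcomp x (n+1) := by
  classical
  rw [pcomp, pcomp, ← res_image x n]
  exact Finset.card_image_le

open Classical in
/-- unique extension: if the complexity does not grow, equal n-windows extend equally -/
lemma unique_ext {x : ℤ → Fin k} {n : ℕ} (hue : pcomp x (n+1) ≤ pcomp x n)
    (a b : ℤ) (h : wAt x n a = wAt x n b) : x (a + (n:ℕ)) = x (b + (n:ℕ)) := by
  classical
  set A := (Finset.univ.filter (fun w : Fin (n+1) → Fin k => occF x w)) with hA
  have hinj : Set.InjOn (res n) (A : Set (Fin (n+1) → Fin k)) := by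
    apply Finset.card_image_iff.mp
    refine le_antisymm Finset.card_image_le ?_
    rw [res_image x n]
    exact hue
  have h1 : wAt x (n+1) a ∈ A := mem_pfilter.mpr (occF_wAt _ _ _)
  have h2 : wAt x (n+1) b ∈ A := mem_pfilter.mpr (occF_wAt _ _ _)
  have hres : res n (wAt x (n+1) a) = res n (wAt x (n+1) b) := by
    funext j
    have := congrFun h j
    simpa [res, wAt] using this
  have heq := hinj h1 h2 hres
  have := congrFun heq ⟨n, Nat.lt_succ_self n⟩
  simpa [wAt] using this

lemma window_prop {x : ℤ → Fin k} {n : ℕ} (hn : 1 ≤ n) (hue : pcomp x (n+1) ≤ pcomp x n)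
    (a b : ℤ) (h : wAt x n a = wAt x n b) :
    ∀ t : ℕ, wAt x n (a + (t:ℕ)) = wAt x n (b + (t:ℕ)) := by
  intro t
  induction t with
  | zero => simpa using h
  | succ t ih =>
    funext j
    by_cases hj : (j : ℕ) + 1 < n
    · have := congrFun ih ⟨(j:ℕ)+1, hj⟩
      simp only [wAt] at this ⊢
      push_cast at this ⊢
      convert this using 2 <;> ring
    · have hj' : (j:ℕ) + 1 = n := by omega
      have hstep := unique_ext hue (a + (t:ℕ)) (b + (t:ℕ)) ih
      have hcast : ((j:ℕ) : ℤ) + 1 = (n : ℤ) := by exact_mod_cast hj'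
      simp only [wAt] at hstep ⊢
      push_cast
      rw [show a + ((t:ℤ)+1) + (j:ℕ) = a + (t:ℕ) + (((j:ℕ):ℤ) + 1) by push_cast; ring, hcast]
      rw [show b + ((t:ℤ)+1) + (j:ℕ) = b + (t:ℕ) + (((j:ℕ):ℤ) + 1) by push_cast; ring, hcast]
      exact hstep

lemma forward_periodic {x : ℤ → Fin k} {n : ℕ} (hn : 1 ≤ n) (hue : pcomp x (n+1) ≤ pcomp x n)
    (a : ℤ) (T : ℕ) (h : wAt x n a = wAt x n (a + (T:ℕ))) :
    ∀ t : ℕ, x (a + (t:ℕ) + (T:ℕ)) = x (a + (t:ℕ)) := by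
  intro t
  have := window_prop hn hue a (a + (T:ℕ)) h t
  have h0 := congrFun this ⟨0, hn⟩
  simp only [wAt] at h0
  push_cast at h0
  simp only [add_zero] at h0
  rw [show a + (t:ℤ) + (T:ℕ) = a + (T:ℕ) + (t:ℤ) by ring]
  exact h0.symm

open Classical in
lemma exists_rep {x : ℤ → Fin k} {n : ℕ} (hn : 1 ≤ n) :
    ∃ i j : ℕ, i < j ∧ j ≤ pcomp x n ∧ wAt x n (i:ℤ) = wAt x n (j:ℤ) := by
  classical
  have hmaps : ∀ i ∈ Finset.range (pcomp x n + 1),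
      wAt x n (i:ℤ) ∈ (Finset.univ.filter (fun w : Fin n → Fin k => occF x w)) :=
    fun i _ => mem_pfilter.mpr (occF_wAt _ _ _)
  have hcard : (Finset.univ.filter (fun w : Fin n → Fin k => occF x w)).card
      < (Finset.range (pcomp x n + 1)).card := by
    rw [Finset.card_range]; exact Nat.lt_succ_self _
  obtain ⟨i, hi, j, hj, hne, heq⟩ :=
    Finset.exists_ne_map_eq_of_card_lt_of_maps_to hcard hmaps
  simp only [Finset.mem_range] at hi hj
  rcases lt_or_gt_of_ne hne with h | h
  · exact ⟨i, j, h, by omega, heq⟩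
  · exact ⟨j, i, h, by omega, heq.symm⟩

/-- Case A: low complexity implies x is (globally) periodic. -/
lemma periodic_of_lowComplexity {x : ℤ → Fin k} {K : ℝ}
    (hLR : ∀ n : ℕ, 1 ≤ n → ∀ u v : List (Fin k), u.length = n → v.length = ⌈K * n⌉₊ →
      occursIn u x → occursIn v x → u <:+: v)
    (hA : HasLowComplexity x) :
    ∃ T : ℕ, 1 ≤ T ∧ ∀ s : ℤ, x (s + (T:ℕ)) = x s := by
  classical
  obtain ⟨d, hd, g, hg⟩ := hA
  have hpd : pcomp x d ≤ d := by
    rw [pcomp]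
    calc (Finset.univ.filter (fun w : Fin d → Fin k => occF x w)).card
        ≤ (Finset.univ : Finset (Fin d)).card := by
          apply Finset.card_le_card_of_injOn g (fun a _ => Finset.mem_univ _)
          intro w1 h1 w2 h2 he
          exact hg w1 w2 (mem_pfilter.mp h1) (mem_pfilter.mp h2) he
      _ = d := by simp
  by_cases hc : ∀ i : ℤ, x i = x 0
  · exact ⟨1, le_refl 1, fun s => by rw [hc (s + (1:ℕ)), hc s]⟩
  -- p 1 ≥ 2
  push_neg at hc
  obtain ⟨i0, hi0⟩ := hc
  have hp1 : 2 ≤ pcomp x 1 := by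
    rw [pcomp]
    apply Finset.one_lt_card.mpr
    refine ⟨wAt x 1 i0, mem_pfilter.mpr (occF_wAt _ _ _),
           wAt x 1 0, mem_pfilter.mpr (occF_wAt _ _ _), ?_⟩
    intro he
    have := congrFun he ⟨0, one_pos⟩
    simp only [wAt] at this
    push_cast at this
    simp only [add_zero, zero_add] at this
    exact hi0 this
  -- find a plateau
  have hplat : ∃ n : ℕ, 1 ≤ n ∧ pcomp x (n+1) ≤ pcomp x n := by
    by_contra hstrict
    push_neg at hstrict
    have key : ∀ t : ℕ, t + 1 ≤ d → 2 + t ≤ pcomp x (1 + t) := by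
      intro t
      induction t with
      | zero => intro _; simpa using hp1
      | succ t ih =>
        intro ht
        have h1 := ih (by omega)
        have h2 := hstrict (1 + t) (by omega)
        have : 1 + (t + 1) = (1 + t) + 1 := by omega
        rw [this]
        omega
    have := key (d - 1) (by omega)
    have hle : 1 + (d - 1) = d := by omega
    rw [hle] at this
    omega
  obtain ⟨n, hn1, hue⟩ := hplat
  obtain ⟨i, j, hij, hjle, hwin⟩ := exists_rep (x := x) hn1
  set T := j - i with hT
  have hT1 : 1 ≤ T := by omega
  have hwin' : wAt x n (i:ℤ) = wAt x n ((i:ℤ) + (T:ℕ)) := by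
    rw [show ((i:ℤ) + (T:ℕ)) = (j:ℕ) by push_cast; omega]
    exact hwin
  have hfwd : ∀ t : ℕ, x ((i:ℤ) + (t:ℕ) + (T:ℕ)) = x ((i:ℤ) + (t:ℕ)) :=
    forward_periodic hn1 hue (i:ℤ) T hwin'
  -- globalize using LR
  refine ⟨T, hT1, fun s => ?_⟩
  have hTT : 1 ≤ T + 1 := by omega
  obtain ⟨s', hs'1, hs'2⟩ :=
    lr_window hLR hTT (occF_wAt x (T+1) s) (i:ℤ)
  -- hs'2 : ∀ j : Fin (T+1), x ((i:ℤ) + s' + j) = wAt x (T+1) s j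
  have hlast := hs'2 ⟨T, Nat.lt_succ_self T⟩
  have hfirst := hs'2 ⟨0, by omega⟩
  simp only [wAt] at hlast hfirst
  have hper := hfwd s'
  -- x (i + s' + T) = x (i + s')
  calc x (s + (T:ℕ)) = x ((i:ℤ) + (s':ℕ) + (T:ℕ)) := by rw [← hlast]
    _ = x ((i:ℤ) + (s':ℕ)) := hper
    _ = x s := by simpa using hfirst

end LRwork

namespace LRwork

variable {k : ℕ}

lemma periodic_iterate {x : ℤ → Fin k} {T : ℕ} (hper : ∀ s : ℤ, x (s + (T:ℕ)) = x s) :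
    ∀ (s q : ℤ), x (s + (T:ℕ) * q) = x s := by
  intro s q
  induction q using Int.induction_on with
  | zero => simp
  | succ n ih =>
    rw [show s + (T:ℤ)*((n:ℤ)+1) = (s + (T:ℤ)*(n:ℤ)) + (T:ℕ) by push_cast; ring, hper, ih]
  | pred n ih =>
    have h1 := hper (s + (T:ℤ)*(-(n:ℤ)-1))
    rw [show s + (T:ℤ)*(-(n:ℤ)-1) + (T:ℕ) = s + (T:ℤ)*(-(n:ℤ)) by push_cast; ring] at h1
    rw [show s + (T:ℤ)*(-(n:ℤ)-1) = s + (T:ℤ)*(-(n:ℤ)) - (T:ℤ) by ring] at h1 ⊢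
    rw [show s + (T:ℤ)*(-(n:ℤ)) - (T:ℤ) = s + (T:ℤ)*(-(n:ℤ)) - T by ring] at h1 ⊢
    rw [← h1]
    exact ih

lemma shift_mod {x : ℤ → Fin k} {T : ℕ} (hT : 1 ≤ T)
    (hper : ∀ s : ℤ, x (s + (T:ℕ)) = x s) (m : ℤ) : x m = x (m % (T:ℤ)) := by
  have hT0 : (0:ℤ) < T := by exact_mod_cast hT
  have hm : m = m % (T:ℤ) + (T:ℤ) * (m / (T:ℤ)) := by
    rw [add_comm]; exact (Int.mul_ediv_add_emod m (T:ℤ)).symm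
  conv_lhs => rw [hm]
  exact periodic_iterate hper (m % (T:ℤ)) (m / (T:ℤ))

lemma orbit_finite {x : ℤ → Fin k} {T : ℕ} (hT : 1 ≤ T)
    (hper : ∀ s : ℤ, x (s + (T:ℕ)) = x s) : (shiftOrbit x).Finite := by
  have hT0 : (0:ℤ) < T := by exact_mod_cast hT
  have hsub : shiftOrbit x ⊆ (fun t : Fin T => fun m : ℤ => x (m + ((t:ℕ):ℤ))) '' Set.univ := by
    rintro y ⟨j, rfl⟩
    have hlt : (j % (T:ℤ)).toNat < T := by
      have h1 : j % (T:ℤ) < T := Int.emod_lt_of_pos j hT0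
      have h2 : 0 ≤ j % (T:ℤ) := Int.emod_nonneg j (by omega)
      omega
    refine ⟨⟨(j % (T:ℤ)).toNat, hlt⟩, Set.mem_univ _, ?_⟩
    funext m
    simp only
    have h2 : 0 ≤ j % (T:ℤ) := Int.emod_nonneg j (by omega)
    have h3 : (((j % (T:ℤ)).toNat : ℕ) : ℤ) = j % (T:ℤ) := Int.toNat_of_nonneg h2
    rw [h3]
    have e1 := shift_mod hT hper (m + j)
    have e2 := shift_mod hT hper (m + j % (T:ℤ))
    have hmod : (m + j) % (T:ℤ) = (m + j % (T:ℤ)) % (T:ℤ) := by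
      conv_lhs => rw [show m + j = m + j % (T:ℤ) + (T:ℤ) * (j / (T:ℤ)) by
        rw [show m + j % (T:ℤ) + (T:ℤ) * (j / (T:ℤ))
            = m + ((T:ℤ) * (j / (T:ℤ)) + j % (T:ℤ)) by ring, Int.mul_ediv_add_emod j (T:ℤ)]]
      apply Int.add_mul_emod_self_left
    rw [e2, e1, hmod]
  exact Set.Finite.subset (Set.finite_univ.image _) hsub

/-- in the periodic case, distinct orbit points differ somewhere in `[0,T)` -/
lemma orbit_close_agree {x : ℤ → Fin k} {T : ℕ} (hT : 1 ≤ T)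
    (hper : ∀ s : ℤ, x (s + (T:ℕ)) = x s) {y z : ℤ → Fin k}
    (hy : y ∈ shiftOrbit x) (hz : z ∈ shiftOrbit x)
    (h : ∀ n : ℕ, n < T → y (n:ℤ) = z (n:ℤ)) : y = z := by
  obtain ⟨a, rfl⟩ := hy
  obtain ⟨b, rfl⟩ := hz
  funext m
  show x (m + a) = x (m + b)
  have hT0 : (0:ℤ) < T := by exact_mod_cast hT
  have h2 : 0 ≤ m % (T:ℤ) := Int.emod_nonneg m (by omega)
  have h1 : m % (T:ℤ) < T := Int.emod_lt_of_pos m hT0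
  have hlt : (m % (T:ℤ)).toNat < T := by omega
  have hmt : (((m % (T:ℤ)).toNat : ℕ) : ℤ) = m % (T:ℤ) := Int.toNat_of_nonneg h2
  have key := h (m % (T:ℤ)).toNat hlt
  simp only [hmt] at key
  -- key : x (m % T + a) = x (m % T + b)
  have e1 := shift_mod hT hper (m + a)
  have e2 := shift_mod hT hper (m + b)
  have e3 := shift_mod hT hper (m % (T:ℤ) + a)
  have e4 := shift_mod hT hper (m % (T:ℤ) + b)
  have hmod : ∀ c : ℤ, (m + c) % (T:ℤ) = (m % (T:ℤ) + c) % (T:ℤ) := by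
    intro c
    conv_lhs => rw [show m + c = m % (T:ℤ) + c + (T:ℤ) * (m / (T:ℤ)) by
      rw [show m % (T:ℤ) + c + (T:ℤ) * (m / (T:ℤ)) = ((T:ℤ) * (m / (T:ℤ)) + m % (T:ℤ)) + c by ring,
          Int.mul_ediv_add_emod m (T:ℤ)]]
    rw [Int.add_mul_emod_self_left]
  rw [e1, e2, hmod a, hmod b, ← e3, ← e4]
  exact key

lemma fembed_of_periodic (x : ℤ → Fin k) {T : ℕ} (hT : 1 ≤ T)
    (hper : ∀ s : ℤ, x (s + (T:ℕ)) = x s) :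
    FEmbeddableSubshift (closure (shiftOrbit x)) := by
  classical
  have hfin : (shiftOrbit x).Finite := orbit_finite hT hper
  have hcl : closure (shiftOrbit x) = shiftOrbit x := hfin.isClosed.closure_eq
  have hfin2 : (closure (shiftOrbit x)).Finite := by rw [hcl]; exact hfin
  haveI hft : Fintype ↥(closure (shiftOrbit x)) := hfin2.fintype
  set n := Fintype.card ↥(closure (shiftOrbit x)) with hn
  let e := Fintype.equivFin ↥(closure (shiftOrbit x))
  refine ⟨1, ((n:ℝ)+1) * ((T:ℝ)+1),
    fun y => EuclideanSpace.single (0 : Fin 1) (((e y : ℕ) : ℝ)), ?_, ?_⟩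
  · have h0n : (0:ℝ) ≤ (n:ℝ) := Nat.cast_nonneg n
    have h0T : (0:ℝ) ≤ (T:ℝ) := Nat.cast_nonneg T
    nlinarith
  intro y z
  by_cases hyz : (y : ℤ → Fin k) = (z : ℤ → Fin k)
  · have : y = z := Subtype.ext hyz
    subst this
    rw [combDist_self rfl]
    simp
  · have hyne : y ≠ z := fun h => hyz (by rw [h])
    obtain ⟨N, hNspec, hNmin, hD⟩ := combDist_spec hyz
    -- N < T
    have hNT : N < T := by
      by_contra hge
      push_neg at hge
      apply hyz
      apply orbit_close_agree hT hper (subset_of_eq hcl y.2) (subset_of_eq hcl z.2)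
      intro m hm
      exact (hNmin m (by omega)).1
    -- norm difference
    have hsub : EuclideanSpace.single (0 : Fin 1) (((e y : ℕ) : ℝ))
        - EuclideanSpace.single (0 : Fin 1) (((e z : ℕ) : ℝ))
        = EuclideanSpace.single (0 : Fin 1) ((((e y : ℕ) : ℝ)) - (((e z : ℕ) : ℝ))) := by
      ext i
      simp [EuclideanSpace.single_apply, PiLp.sub_apply]
      split <;> ring
    have hnorm : ‖EuclideanSpace.single (0 : Fin 1) (((e y : ℕ) : ℝ))
        - EuclideanSpace.single (0 : Fin 1) (((e z : ℕ) : ℝ))‖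
        = |(((e y : ℕ) : ℝ)) - (((e z : ℕ) : ℝ))| := by
      rw [hsub, EuclideanSpace.norm_single]
      exact Real.norm_eq_abs _
    have hene : (e y : ℕ) ≠ (e z : ℕ) := by
      intro h
      exact hyne (e.injective (Fin.ext h))
    have h1le : (1:ℝ) ≤ |(((e y : ℕ) : ℝ)) - (((e z : ℕ) : ℝ))| := by
      have hzz : ((e y : ℕ) : ℤ) ≠ ((e z : ℕ) : ℤ) := by exact_mod_cast hene
      have h2 : 1 ≤ |((e y : ℕ) : ℤ) - ((e z : ℕ) : ℤ)| := Int.one_le_abs (by omega)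
      exact_mod_cast h2
    have hler : |(((e y : ℕ) : ℝ)) - (((e z : ℕ) : ℝ))| ≤ n := by
      have hy' : (((e y : ℕ)):ℝ) < n := by exact_mod_cast (e y).isLt
      have hz' : (((e z : ℕ)):ℝ) < n := by exact_mod_cast (e z).isLt
      have hy0 : (0:ℝ) ≤ ((e y : ℕ):ℝ) := by positivity
      have hz0 : (0:ℝ) ≤ ((e z : ℕ):ℝ) := by positivity
      rw [abs_sub_le_iff]
      constructor <;> linarith
    have hD0 : (0:ℝ) < combDist (y : ℤ → Fin k) (z : ℤ → Fin k) := by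
      rw [hD]; positivity
    have hDle1 : combDist (y : ℤ → Fin k) (z : ℤ → Fin k) ≤ 1 := by
      rw [hD]
      rw [div_le_one (by positivity)]
      have : (0:ℝ) ≤ (N:ℝ) := Nat.cast_nonneg N
      linarith
    have hDgeT : 1/((T:ℝ)+1) ≤ combDist (y : ℤ → Fin k) (z : ℤ → Fin k) := by
      rw [hD]
      apply one_div_le_one_div_of_le (by positivity)
      have : (N:ℝ) ≤ (T:ℝ) := by exact_mod_cast le_of_lt hNT
      linarith
    have hc1 : (1:ℝ) ≤ ((n:ℝ)+1) * ((T:ℝ)+1) := by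
      have h0n : (0:ℝ) ≤ (n:ℝ) := Nat.cast_nonneg n
      have h0T : (0:ℝ) ≤ (T:ℝ) := Nat.cast_nonneg T
      nlinarith
    have hc0 : (0:ℝ) < ((n:ℝ)+1) * ((T:ℝ)+1) := by positivity
    constructor
    · simp only
      rw [hnorm]
      calc (1/(((n:ℝ)+1) * ((T:ℝ)+1))) * combDist (y : ℤ → Fin k) (z : ℤ → Fin k)
          ≤ 1 * 1 := by
            apply mul_le_mul _ hDle1 (le_of_lt hD0) zero_le_one
            rw [div_le_one hc0]
            linarith
        _ ≤ |(((e y : ℕ) : ℝ)) - (((e z : ℕ) : ℝ))| := by rw [one_mul]; exact h1le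
    · simp only
      rw [hnorm]
      have h5 : (((n:ℝ)+1) * ((T:ℝ)+1)) * (1/((T:ℝ)+1)) = (n:ℝ)+1 := by
        field_simp
      calc |(((e y : ℕ) : ℝ)) - (((e z : ℕ) : ℝ))| ≤ (n:ℝ) := hler
        _ ≤ (((n:ℝ)+1) * ((T:ℝ)+1)) * (1/((T:ℝ)+1)) := by rw [h5]; linarith
        _ ≤ (((n:ℝ)+1) * ((T:ℝ)+1)) * combDist (y : ℤ → Fin k) (z : ℤ → Fin k) := by
            apply mul_le_mul_of_nonneg_left hDgeT (le_of_lt hc0)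

end LRwork

namespace LRwork

variable {k : ℕ}

/-- window length at scale n -/
def ll (n : ℕ) : ℕ := 2^(n+1) - 1
/-- half-width at scale n -/
def hh (n : ℕ) : ℕ := 2^n - 1
/-- parent window length at scale n -/
def pl (n : ℕ) : ℕ := if n = 0 then 0 else 2^n - 1
/-- minimal gap at scale n -/
noncomputable def Gg (K : ℝ) (n : ℕ) : ℕ := ⌊(pl n : ℝ)/(K-1)⌋₊ + 1

lemma ll_pos (n : ℕ) : 1 ≤ ll n := by
  have : 2 ≤ 2^(n+1) := by
    calc 2 = 2^1 := rfl
    _ ≤ 2^(n+1) := Nat.pow_le_pow_right (by norm_num) (by omega)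
  simp only [ll]; omega

lemma ll_eq (n : ℕ) : ll n = 2 * pl n + 1 := by
  rcases n with _ | m
  · rfl
  · simp only [ll, pl, if_neg (Nat.succ_ne_zero m)]
    have h1 : 1 ≤ 2^(m+1) := Nat.one_le_two_pow
    have h2 : 2^(m+1+1) = 2 * 2^(m+1) := by rw [pow_succ]; ring
    omega

lemma pl_succ (m : ℕ) : pl (m+1) = ll m := by
  simp only [pl, ll, if_neg (Nat.succ_ne_zero m)]

lemma Gg_pos (K : ℝ) (n : ℕ) : 1 ≤ Gg K n := by simp [Gg]

lemma hh_cast (n : ℕ) : ((hh n : ℕ) : ℤ) = 2^n - 1 := by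
  have h1 : 1 ≤ 2^n := Nat.one_le_two_pow
  simp only [hh]
  push_cast [h1]
  ring

/-- the centered window of `y` at scale `n` -/
def win (y : ℤ → Fin k) (n : ℕ) : Fin (ll n) → Fin k :=
  fun j => y (((j:ℕ):ℤ) - ((hh n : ℕ) : ℤ))

lemma occF_win {x y : ℤ → Fin k} (hy : y ∈ closure (shiftOrbit x)) (n : ℕ) :
    occF x (win y n) := by
  have h := closure_window hy (-((hh n : ℕ) : ℤ)) (ll n)
  have he : win y n = fun j : Fin (ll n) => y (-((hh n : ℕ) : ℤ) + (j:ℕ)) := by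
    funext j
    simp only [win]
    congr 1
    ring
  rw [he]
  exact h

/-- index of the parent window inside the child window -/
def midIdx (nn : ℕ) (j : Fin (ll nn)) : Fin (ll (nn+1)) :=
  ⟨2^nn + (j:ℕ), by
    have h1 : (j:ℕ) < ll nn := j.isLt
    have h2 : 1 ≤ 2^(nn+1) := Nat.one_le_two_pow
    have h3 : 2^(nn+1+1) = 2 * 2^(nn+1) := by rw [pow_succ]; ring
    have h4 : 2^(nn+1) = 2 * 2^nn := by rw [pow_succ]; ring
    simp only [ll] at h1 ⊢
    omega⟩

lemma win_mid (y : ℤ → Fin k) (nn : ℕ) (j : Fin (ll nn)) :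
    win y (nn+1) (midIdx nn j) = win y nn j := by
  show y _ = y _
  congr 1
  show (((midIdx nn j : Fin (ll (nn+1))) : ℕ) : ℤ) - _ = _
  rw [hh_cast, hh_cast]
  show (((2^nn + (j:ℕ) : ℕ)) : ℤ) - _ = _
  push_cast
  rw [show ((2:ℤ)^(nn+1)) = 2 * 2^nn by rw [pow_succ]; ring]
  ring

/-- The gap lemma: in case B (no low complexity), two occurrences of the same
word of length m must be at distance d with m < (K-1)d. -/
lemma gap_lemma {x : ℤ → Fin k} {K : ℝ} (hK : 1 < K)
    (hLR : ∀ n : ℕ, 1 ≤ n → ∀ u v : List (Fin k), u.length = n → v.length = ⌈K * n⌉₊ →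
      occursIn u x → occursIn v x → u <:+: v)
    (hB : ¬ HasLowComplexity x)
    {m : ℕ} {w : Fin m → Fin k} {a : ℤ} {d : ℕ} (hd : 1 ≤ d)
    (h1 : ∀ j : Fin m, x (a + (j:ℕ)) = w j)
    (h2 : ∀ j : Fin m, x (a + (d:ℕ) + (j:ℕ)) = w j) :
    (m : ℝ) < (K - 1) * d := by
  by_contra hcon
  push_neg at hcon
  have hceil : ⌈K * (d:ℝ)⌉₊ ≤ m + d := by
    apply Nat.ceil_le.mpr
    have : K * d = (K-1)*d + d := by ring
    rw [this]
    push_cast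
    linarith
  have hper : ∀ t : ℕ, t < m → x (a + (t:ℕ)) = x (a + (d:ℕ) + (t:ℕ)) := by
    intro t ht
    rw [h1 ⟨t, ht⟩, h2 ⟨t, ht⟩]
  have claim : ∀ s : ℕ, s ≤ m → ∃ q : ℕ, q < d ∧
      wAt x d (a + (q:ℕ)) = wAt x d (a + (s:ℕ)) := by
    intro s
    induction s using Nat.strong_induction_on with
    | _ s ih =>
      intro hsm
      by_cases hsd : s < d
      · exact ⟨s, hsd, rfl⟩
      · have hdd : d ≤ s := not_lt.mp hsd
        have hstep : wAt x d (a + ((s - d : ℕ):ℤ)) = wAt x d (a + (s:ℕ)) := by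
          funext j
          have ht : (s - d) + (j:ℕ) < m := by
            have := j.isLt
            omega
          have hp := hper ((s - d) + (j:ℕ)) ht
          simp only [wAt]
          rw [show a + ((s - d : ℕ):ℤ) + ((j:ℕ):ℤ) = a + (((s - d) + (j:ℕ) : ℕ):ℤ) by
            push_cast; ring]
          rw [hp]
          congr 1
          push_cast
          omega
        obtain ⟨q, hq, heq⟩ := ih (s - d) (by omega) (by omega)
        refine ⟨q, hq, ?_⟩
        rw [heq]
        exact hstep
  apply hB
  refine ⟨d, hd, fun u => if h : ∃ q : Fin d, u = wAt x d (a + ((q:ℕ):ℤ)) then h.choose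
    else ⟨0, hd⟩, ?_⟩
  have hkey : ∀ u : Fin d → Fin k, occF x u → ∃ q : Fin d, u = wAt x d (a + ((q:ℕ):ℤ)) := by
    intro u hu
    obtain ⟨s, hs1, hs2⟩ := lr_window hLR hd hu a
    have hsm : s ≤ m := by omega
    obtain ⟨q, hq, heq⟩ := claim s hsm
    refine ⟨⟨q, hq⟩, ?_⟩
    rw [heq]
    funext j
    simp only [wAt]
    exact (hs2 j).symm
  intro w1 w2 hw1 hw2 hgeq
  have e1 := hkey w1 hw1
  have e2 := hkey w2 hw2
  simp only [dif_pos e1, dif_pos e2] at hgeq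
  rw [e1.choose_spec, e2.choose_spec, hgeq]

/-- gap in terms of the integer gap bound -/
lemma gap_div {x : ℤ → Fin k} {K : ℝ} (hK : 1 < K)
    (hLR : ∀ n : ℕ, 1 ≤ n → ∀ u v : List (Fin k), u.length = n → v.length = ⌈K * n⌉₊ →
      occursIn u x → occursIn v x → u <:+: v)
    (hB : ¬ HasLowComplexity x)
    {n : ℕ} {w : Fin (pl n) → Fin k} {a : ℤ} {d : ℕ} (hd : 1 ≤ d)
    (h1 : ∀ j : Fin (pl n), x (a + (j:ℕ)) = w j)
    (h2 : ∀ j : Fin (pl n), x (a + (d:ℕ) + (j:ℕ)) = w j) :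
    Gg K n ≤ d := by
  have hgap := gap_lemma hK hLR hB hd h1 h2
  have hK0 : (0:ℝ) < K - 1 := by linarith
  have hdiv : ((pl n : ℕ):ℝ)/(K-1) < d := by
    rw [div_lt_iff₀ hK0]
    linarith [hgap]
  have hfl : ⌊((pl n : ℕ):ℝ)/(K-1)⌋₊ < d := by
    have h1' : (⌊((pl n : ℕ):ℝ)/(K-1)⌋₊ : ℝ) ≤ ((pl n : ℕ):ℝ)/(K-1) :=
      Nat.floor_le (by positivity)
    have : (⌊((pl n : ℕ):ℝ)/(K-1)⌋₊ : ℝ) < (d:ℝ) := lt_of_le_of_lt h1' hdiv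
    exact_mod_cast this
  simp only [Gg]
  omega

open Classical in
/-- the color of a window at scale n -/
noncomputable def chi (x : ℤ → Fin k) (K : ℝ) (n : ℕ) (W : Fin (ll n) → Fin k) : ℕ :=
  if h : ∃ s : ℕ, s + ll n ≤ ⌈K * (ll n : ℝ)⌉₊ ∧
      ∀ j : Fin (ll n), x (((s:ℕ):ℤ) + (j:ℕ)) = W j
  then (Nat.find h) / (Gg K n) else 0

lemma chi_ex {x : ℤ → Fin k} {K : ℝ}
    (hLR : ∀ n : ℕ, 1 ≤ n → ∀ u v : List (Fin k), u.length = n → v.length = ⌈K * n⌉₊ →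
      occursIn u x → occursIn v x → u <:+: v)
    {n : ℕ} {W : Fin (ll n) → Fin k} (hW : occF x W) :
    ∃ s : ℕ, s + ll n ≤ ⌈K * (ll n : ℝ)⌉₊ ∧
      ∀ j : Fin (ll n), x (((s:ℕ):ℤ) + (j:ℕ)) = W j := by
  obtain ⟨s, hs1, hs2⟩ := lr_window hLR (ll_pos n) hW 0
  refine ⟨s, hs1, fun j => ?_⟩
  have := hs2 j
  rwa [zero_add] at this

open Classical in
lemma chi_le {x : ℤ → Fin k} {K : ℝ} (hK : 1 < K)
    (hLR : ∀ n : ℕ, 1 ≤ n → ∀ u v : List (Fin k), u.length = n → v.length = ⌈K * n⌉₊ →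
      occursIn u x → occursIn v x → u <:+: v)
    {n : ℕ} {W : Fin (ll n) → Fin k} (hW : occF x W) :
    ((chi x K n W : ℕ) : ℝ) ≤ 8*K*K := by
  have hex := chi_ex hLR hW
  rw [chi, dif_pos hex]
  set s := Nat.find hex with hs
  obtain ⟨hs1, hs2⟩ := Nat.find_spec hex
  set G := Gg K n with hG
  set m := pl n with hm
  have hK0 : (0:ℝ) < K - 1 := by linarith
  have hlm : ll n = 2 * m + 1 := ll_eq n
  -- bound on s
  have hceil : (⌈K * (ll n : ℝ)⌉₊ : ℝ) < K * (ll n) + 1 :=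
    Nat.ceil_lt_add_one (by positivity)
  have hsR : (s:ℝ) < (K-1)*(2*(m:ℝ)+1) + 1 := by
    have h2 : (s:ℝ) + (ll n : ℝ) ≤ (⌈K * (ll n : ℝ)⌉₊ : ℝ) := by exact_mod_cast hs1
    have h3 : ((ll n : ℕ):ℝ) = 2*(m:ℝ)+1 := by rw [hlm]; push_cast; ring
    nlinarith [h2, hceil, h3]
  have hG1 : (1:ℝ) ≤ (G:ℝ) := by exact_mod_cast Gg_pos K n
  have hGm : (m:ℝ) < (K-1) * G := by
    have h4 : ((m:ℕ):ℝ)/(K-1) < (G:ℝ) := by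
      rw [hG, Gg, ← hm]
      push_cast
      exact Nat.lt_floor_add_one _
    rw [div_lt_iff₀ hK0] at h4
    linarith
  have hG0 : (0:ℝ) < (G:ℝ) := by linarith
  calc ((s / G : ℕ) : ℝ) ≤ (s:ℝ)/(G:ℝ) := Nat.cast_div_le
    _ ≤ 8*K*K := by
        rw [div_le_iff₀ hG0]
        have hm0 : (0:ℝ) ≤ (m:ℝ) := Nat.cast_nonneg _
        nlinarith [hGm, hG1, hm0, hsR, hK]

end LRwork

namespace LRwork

variable {k : ℕ}

open Classical in
lemma chi_ne {x : ℤ → Fin k} {K : ℝ} (hK : 1 < K)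
    (hLR : ∀ n : ℕ, 1 ≤ n → ∀ u v : List (Fin k), u.length = n → v.length = ⌈K * n⌉₊ →
      occursIn u x → occursIn v x → u <:+: v)
    (hB : ¬ HasLowComplexity x)
    {n : ℕ} {y z : ℤ → Fin k}
    (hy : y ∈ closure (shiftOrbit x)) (hz : z ∈ closure (shiftOrbit x))
    (hpar : ∀ m : ℕ, m < n → win y m = win z m)
    (hne : win y n ≠ win z n) :
    chi x K n (win y n) ≠ chi x K n (win z n) := by
  have hWy : occF x (win y n) := occF_win hy n
  have hWz : occF x (win z n) := occF_win hz n
  have hy' := chi_ex (K := K) hLR hWy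
  have hz' := chi_ex (K := K) hLR hWz
  rw [chi, dif_pos hy', chi, dif_pos hz']
  obtain ⟨hs1a, hs1b⟩ := Nat.find_spec hy'
  obtain ⟨hs2a, hs2b⟩ := Nat.find_spec hz'
  set s1 := Nat.find hy' with hs1d
  set s2 := Nat.find hz' with hs2d
  have heqne : s1 ≠ s2 := by
    intro he
    apply hne
    funext j
    rw [← hs1b j, ← hs2b j, he]
  rcases n with _ | nn
  · -- scale 0 : G = 1
    have hG : Gg K 0 = 1 := by simp [Gg, pl]
    rw [hG, Nat.div_one, Nat.div_one]
    exact heqne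
  · -- scale nn+1
    have key : ∀ (s t : ℕ) (W1 W2 : Fin (ll (nn+1)) → Fin k),
        (∀ j : Fin (ll (nn+1)), x (((s:ℕ):ℤ) + (j:ℕ)) = W1 j) →
        (∀ j : Fin (ll (nn+1)), x (((t:ℕ):ℤ) + (j:ℕ)) = W2 j) →
        (∀ j : Fin (ll nn), W1 (midIdx nn j) = W2 (midIdx nn j)) → s < t →
        s / Gg K (nn+1) < t / Gg K (nn+1) := by
      intro s t W1 W2 hW1 hW2 hmid hlt
      set d := t - s with hdd
      have hd1 : 1 ≤ d := by omega
      set P : Fin (pl (nn+1)) → Fin k :=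
        fun j => W1 (midIdx nn (Fin.cast (pl_succ nn) j)) with hP
      have hocc1 : ∀ j : Fin (pl (nn+1)),
          x ((((s:ℕ):ℤ) + ((2^nn : ℕ):ℤ)) + ((j:ℕ):ℤ)) = P j := by
        intro j
        have h5 := hW1 (midIdx nn (Fin.cast (pl_succ nn) j))
        rw [show (((s:ℕ):ℤ) + ((2^nn : ℕ):ℤ)) + ((j:ℕ):ℤ)
            = ((s:ℕ):ℤ) + (((midIdx nn (Fin.cast (pl_succ nn) j) : Fin (ll (nn+1))):ℕ):ℤ) by
          show _ = ((s:ℕ):ℤ) + (((2^nn + ((j:ℕ)) : ℕ)):ℤ)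
          push_cast
          ring]
        exact h5
      have hocc2 : ∀ j : Fin (pl (nn+1)),
          x ((((s:ℕ):ℤ) + ((2^nn : ℕ):ℤ)) + ((d:ℕ):ℤ) + ((j:ℕ):ℤ)) = P j := by
        intro j
        have h5 := hW2 (midIdx nn (Fin.cast (pl_succ nn) j))
        rw [← hmid (Fin.cast (pl_succ nn) j)] at h5
        rw [show (((s:ℕ):ℤ) + ((2^nn : ℕ):ℤ)) + ((d:ℕ):ℤ) + ((j:ℕ):ℤ)
            = ((t:ℕ):ℤ) + (((midIdx nn (Fin.cast (pl_succ nn) j) : Fin (ll (nn+1))):ℕ):ℤ) by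
          show _ = ((t:ℕ):ℤ) + (((2^nn + ((j:ℕ)) : ℕ)):ℤ)
          have ht : (t:ℤ) = (s:ℤ) + (d:ℤ) := by
            have : t = s + d := by omega
            exact_mod_cast congrArg (Nat.cast : ℕ → ℤ) this
          rw [ht]
          push_cast
          ring]
        exact h5
      have hgd : Gg K (nn+1) ≤ d := gap_div hK hLR hB hd1 hocc1 hocc2
      have hstep : (s + Gg K (nn+1)) / Gg K (nn+1) ≤ t / Gg K (nn+1) :=
        Nat.div_le_div_right (by omega)
      rw [Nat.add_div_right _ (by have := Gg_pos K (nn+1); omega : 0 < Gg K (nn+1))] at hstep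
      omega
    have hmid1 : ∀ j : Fin (ll nn), win y (nn+1) (midIdx nn j) = win z (nn+1) (midIdx nn j) := by
      intro j
      rw [win_mid, win_mid]
      rw [hpar nn (Nat.lt_succ_self nn)]
    rcases Nat.lt_trichotomy s1 s2 with hlt | heqs | hgt
    · exact Nat.ne_of_lt (key s1 s2 _ _ hs1b hs2b hmid1 hlt)
    · exact absurd heqs heqne
    · exact (Nat.ne_of_lt (key s2 s1 _ _ hs2b hs1b (fun j => (hmid1 j).symm) hgt)).symm

end LRwork

namespace LRwork

variable {k : ℕ}

noncomputable def Mc (K : ℝ) : ℕ := ⌈8*K*K⌉₊ + 2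

lemma Mc_pos (K : ℝ) : 0 < Mc K := by simp [Mc]

open Classical in
lemma chi_lt {x : ℤ → Fin k} {K : ℝ} (hK : 1 < K)
    (hLR : ∀ n : ℕ, 1 ≤ n → ∀ u v : List (Fin k), u.length = n → v.length = ⌈K * n⌉₊ →
      occursIn u x → occursIn v x → u <:+: v)
    {n : ℕ} {W : Fin (ll n) → Fin k} (hW : occF x W) :
    chi x K n W < Mc K := by
  have h1 := chi_le hK hLR hW
  have h2 : (8*K*K : ℝ) ≤ (⌈8*K*K⌉₊ : ℝ) := Nat.le_ceil _
  have h3 : ((chi x K n W : ℕ) : ℝ) < ((⌈8*K*K⌉₊ + 2 : ℕ) : ℝ) := by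
    push_cast
    linarith
  have h4 : chi x K n W < ⌈8*K*K⌉₊ + 2 := by exact_mod_cast h3
  simpa [Mc] using h4

noncomputable def idxF (x : ℤ → Fin k) (K : ℝ) (n : ℕ) (y : ℤ → Fin k) : Fin (2 * Mc K) :=
  ⟨(n % 2) * Mc K + chi x K n (win y n) % Mc K, by
    have h1 : n % 2 = 0 ∨ n % 2 = 1 := by omega
    have h2 : chi x K n (win y n) % Mc K < Mc K := Nat.mod_lt _ (Mc_pos K)
    rcases h1 with h | h <;> rw [h] <;> omega⟩

lemma idxF_eq_of_win (x : ℤ → Fin k) (K : ℝ) {n : ℕ} {y z : ℤ → Fin k}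
    (h : win y n = win z n) : idxF x K n y = idxF x K n z := by
  apply Fin.ext
  simp only [idxF, h]

lemma idxF_parity (x : ℤ → Fin k) (K : ℝ) {m n : ℕ} (y z : ℤ → Fin k)
    (h : m % 2 ≠ n % 2) : idxF x K m y ≠ idxF x K n z := by
  intro he
  apply h
  have hv := congrArg Fin.val he
  simp only [idxF] at hv
  have h2 : chi x K m (win y m) % Mc K < Mc K := Nat.mod_lt _ (Mc_pos K)
  have h3 : chi x K n (win z n) % Mc K < Mc K := Nat.mod_lt _ (Mc_pos K)
  have h4 : m % 2 = 0 ∨ m % 2 = 1 := by omega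
  have h5 : n % 2 = 0 ∨ n % 2 = 1 := by omega
  rcases h4 with h4 | h4 <;> rcases h5 with h5 | h5 <;> rw [h4, h5] at hv ⊢ <;> omega

lemma idxF_ne {x : ℤ → Fin k} {K : ℝ} (hK : 1 < K)
    (hLR : ∀ n : ℕ, 1 ≤ n → ∀ u v : List (Fin k), u.length = n → v.length = ⌈K * n⌉₊ →
      occursIn u x → occursIn v x → u <:+: v)
    {n : ℕ} {y z : ℤ → Fin k}
    (hy : occF x (win y n)) (hz : occF x (win z n))
    (hchi : chi x K n (win y n) ≠ chi x K n (win z n)) :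
    idxF x K n y ≠ idxF x K n z := by
  intro he
  apply hchi
  have hv := congrArg Fin.val he
  simp only [idxF] at hv
  have h2 : chi x K n (win y n) < Mc K := chi_lt hK hLR hy
  have h3 : chi x K n (win z n) < Mc K := chi_lt hK hLR hz
  rw [Nat.mod_eq_of_lt h2, Nat.mod_eq_of_lt h3] at hv
  omega

noncomputable def fv (x : ℤ → Fin k) (K : ℝ) (n : ℕ) (y : ℤ → Fin k) :
    EuclideanSpace ℝ (Fin (2 * Mc K)) :=
  EuclideanSpace.single (idxF x K n y) ((2⁻¹:ℝ)^n)

lemma norm_fv (x : ℤ → Fin k) (K : ℝ) (n : ℕ) (y : ℤ → Fin k) :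
    ‖fv x K n y‖ = (2⁻¹:ℝ)^n := by
  rw [fv, EuclideanSpace.norm_single, Real.norm_eq_abs, abs_of_nonneg (by positivity)]

lemma summable_geo : Summable (fun n : ℕ => (2⁻¹:ℝ)^n) :=
  summable_geometric_of_lt_one (by norm_num) (by norm_num)

lemma summable_fv (x : ℤ → Fin k) (K : ℝ) (y : ℤ → Fin k) :
    Summable (fun n => fv x K n y) := by
  apply Summable.of_norm
  have he : (fun n => ‖fv x K n y‖) = fun n : ℕ => (2⁻¹:ℝ)^n := by
    funext n; exact norm_fv x K n y
  rw [he]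
  exact summable_geo

lemma fv_coord_abs (x : ℤ → Fin k) (K : ℝ) (n : ℕ) (y : ℤ → Fin k) (i : Fin (2 * Mc K)) :
    |fv x K n y i| ≤ (2⁻¹:ℝ)^n := by
  rw [fv, EuclideanSpace.single_apply]
  split
  · rw [abs_of_nonneg (by positivity)]
  · rw [abs_zero]; positivity

lemma fv_coord_self (x : ℤ → Fin k) (K : ℝ) (n : ℕ) (y : ℤ → Fin k) :
    fv x K n y (idxF x K n y) = (2⁻¹:ℝ)^n := by
  rw [fv, EuclideanSpace.single_apply, if_pos rfl]

lemma fv_coord_ne (x : ℤ → Fin k) (K : ℝ) (n : ℕ) (y : ℤ → Fin k) {i : Fin (2 * Mc K)}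
    (h : i ≠ idxF x K n y) : fv x K n y i = 0 := by
  rw [fv, EuclideanSpace.single_apply, if_neg h]

lemma even_geom : ∑' i : ℕ, (if Even i then (2⁻¹:ℝ)^i else 0) = 4/3 := by
  have he : ∀ i : ℕ, (if Even i then (2⁻¹:ℝ)^i else 0) = ((2⁻¹:ℝ)^i + (-2⁻¹:ℝ)^i)/2 := by
    intro i
    rcases Nat.even_or_odd i with h | h
    · rw [if_pos h, h.neg_pow]; ring
    · rw [if_neg (Nat.not_even_iff_odd.mpr h), h.neg_pow]; ring
  rw [tsum_congr he]
  have h1 : Summable (fun i : ℕ => (2⁻¹:ℝ)^i) := summable_geo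
  have h2 : Summable (fun i : ℕ => (-2⁻¹:ℝ)^i) := by
    apply summable_geometric_of_norm_lt_one
    rw [norm_neg]
    simp [Real.norm_eq_abs]
    norm_num
  have hdiv : ∀ i : ℕ, ((2⁻¹:ℝ)^i + (-2⁻¹:ℝ)^i)/2 = 2⁻¹ * ((2⁻¹:ℝ)^i + (-2⁻¹:ℝ)^i) := by
    intro i; ring
  rw [tsum_congr hdiv, tsum_mul_left, h1.tsum_add h2,
      tsum_geometric_of_lt_one (by norm_num) (by norm_num),
      tsum_geometric_of_norm_lt_one (by rw [norm_neg]; simp [Real.norm_eq_abs]; norm_num)]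
  norm_num

end LRwork

namespace LRwork

variable {k : ℕ}

lemma ll_hh (n : ℕ) : ll n = 2 * hh n + 1 := by
  simp only [ll, hh]
  have h1 : 1 ≤ 2^n := Nat.one_le_two_pow
  have h2 : 2^(n+1) = 2 * 2^n := by rw [pow_succ]; ring
  omega

lemma win_pos {y z : ℤ → Fin k} {n : ℕ} (h : win y n = win z n) {p : ℤ}
    (hp : p.natAbs ≤ hh n) : y p = z p := by
  have hll := ll_hh n
  have h0 : 0 ≤ p + (hh n : ℤ) := by omega
  have hlt : (p + (hh n : ℤ)).toNat < ll n := by omega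
  have hc := congrFun h ⟨(p + (hh n : ℤ)).toNat, hlt⟩
  simp only [win] at hc
  rwa [show ((((p + (hh n:ℤ)).toNat : ℕ)) : ℤ) - ((hh n : ℕ) : ℤ) = p by omega] at hc

lemma win_ne_pos {y z : ℤ → Fin k} {n : ℕ} (h : win y n ≠ win z n) :
    ∃ p : ℤ, p.natAbs ≤ hh n ∧ y p ≠ z p := by
  obtain ⟨j, hj⟩ := Function.ne_iff.mp h
  refine ⟨((j:ℕ):ℤ) - ((hh n : ℕ) : ℤ), ?_, hj⟩
  have := j.isLt
  have h2 := ll_hh n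
  omega

lemma win_exists_ne {y z : ℤ → Fin k} (h : y ≠ z) : ∃ n, win y n ≠ win z n := by
  obtain ⟨p, hp⟩ := Function.ne_iff.mp h
  refine ⟨p.natAbs, fun he => hp (win_pos he ?_)⟩
  have := Nat.lt_two_pow_self (n := p.natAbs)
  simp only [hh]
  omega

set_option maxHeartbeats 1000000 in
lemma fembed_of_caseB (x : ℤ → Fin k) {K : ℝ} (hK : 1 < K)
    (hLR : ∀ n : ℕ, 1 ≤ n → ∀ u v : List (Fin k), u.length = n → v.length = ⌈K * n⌉₊ →
      occursIn u x → occursIn v x → u <:+: v)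
    (hB : ¬ HasLowComplexity x) :
    FEmbeddableSubshift (closure (shiftOrbit x)) := by
  classical
  refine ⟨2 * Mc K, 6, fun y => ∑' n, fv x K n (y : ℤ → Fin k), by norm_num, ?_⟩
  intro y z
  by_cases hyz : (y : ℤ → Fin k) = (z : ℤ → Fin k)
  · have hyz' : y = z := Subtype.ext hyz
    subst hyz'
    rw [combDist_self rfl]
    simp
  obtain ⟨N, hNspec, hNmin, hD⟩ := combDist_spec hyz
  have hexk := win_exists_ne hyz
  set kk := Nat.find hexk with hkkd
  have hkspec : win (y:ℤ→Fin k) kk ≠ win (z:ℤ→Fin k) kk := Nat.find_spec hexk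
  have hkmin : ∀ m, m < kk → win (y:ℤ→Fin k) m = win (z:ℤ→Fin k) m :=
    fun m hm => not_not.mp (Nat.find_min hexk hm)
  have hw0 : (0:ℝ) < (2⁻¹:ℝ)^kk := by positivity
  -- lower bound on combDist
  obtain ⟨p, hpabs, hpne⟩ := win_ne_pos hkspec
  have hNle : N ≤ hh kk := by
    by_contra hgt
    push_neg at hgt
    have hlt : p.natAbs < N := by omega
    obtain ⟨e1, e2⟩ := hNmin p.natAbs hlt
    rcases Int.natAbs_eq p with he | he
    · exact hpne (by rw [he]; exact e1)
    · exact hpne (by rw [he]; exact e2)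
  have hDlow : (2⁻¹:ℝ)^kk ≤ combDist (y:ℤ→Fin k) (z:ℤ→Fin k) := by
    rw [hD]
    have h2p : 1 ≤ 2^kk := Nat.one_le_two_pow
    have hN1 : (N:ℝ) + 1 ≤ (2:ℝ)^kk := by
      have hh1 : N + 1 ≤ 2^kk := by simp only [hh] at hNle; omega
      exact_mod_cast hh1
    rw [show (2⁻¹:ℝ)^kk = 1/((2:ℝ)^kk) by rw [inv_pow, one_div]]
    exact one_div_le_one_div_of_le (by positivity) hN1
  -- upper bound on combDist
  have hDhigh : combDist (y:ℤ→Fin k) (z:ℤ→Fin k) ≤ 2 * (2⁻¹:ℝ)^kk := by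
    rw [hD]
    rcases Nat.eq_zero_or_pos kk with h0 | hposk
    · rw [h0]
      have : (1:ℝ) ≤ (N:ℝ) + 1 := by
        have := Nat.cast_nonneg (α := ℝ) N
        linarith
      rw [pow_zero]
      rw [div_le_iff₀ (by positivity)]
      nlinarith [Nat.cast_nonneg (α := ℝ) N]
    · obtain ⟨m, hm⟩ : ∃ m, kk = m + 1 := ⟨kk - 1, by omega⟩
      have hwm : win (y:ℤ→Fin k) m = win (z:ℤ→Fin k) m := hkmin m (by omega)
      have hNgt : hh m < N := by
        by_contra hle
        push_neg at hle
        rcases hNspec with hs | hs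
        · exact hs (win_pos hwm (by simpa using hle))
        · exact hs (win_pos hwm (by simpa using hle))
      have h2p : 1 ≤ 2^m := Nat.one_le_two_pow
      have hN2 : (2:ℝ)^m ≤ (N:ℝ) + 1 := by
        have hh2 : 2^m ≤ N + 1 := by simp only [hh] at hNgt; omega
        exact_mod_cast hh2
      have he1 : 2 * (2⁻¹:ℝ)^kk = 1/((2:ℝ)^m) := by
        rw [hm, pow_succ, inv_pow, one_div]
        have hne : ((2:ℝ)^m) ≠ 0 := by positivity
        field_simp
      rw [he1]
      apply one_div_le_one_div_of_le (by positivity) hN2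
  -- colors differ at scale kk
  have hWy : occF x (win (y:ℤ→Fin k) kk) := occF_win y.2 kk
  have hWz : occF x (win (z:ℤ→Fin k) kk) := occF_win z.2 kk
  have hchi := chi_ne hK hLR hB y.2 z.2 hkmin hkspec
  have hidx : idxF x K kk (y:ℤ→Fin k) ≠ idxF x K kk (z:ℤ→Fin k) :=
    idxF_ne hK hLR hWy hWz hchi
  -- summability
  have hsumy := summable_fv x K (y:ℤ→Fin k)
  have hsumz := summable_fv x K (z:ℤ→Fin k)
  have htwo : Summable (fun n : ℕ => 2*(2⁻¹:ℝ)^n) := summable_geo.mul_left 2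
  have hfveq : ∀ m, m < kk → fv x K m (y:ℤ→Fin k) = fv x K m (z:ℤ→Fin k) := by
    intro m hm
    rw [fv, fv, idxF_eq_of_win x K (hkmin m hm)]
  have hnormle : ∀ n : ℕ, ‖fv x K n (y:ℤ→Fin k) - fv x K n (z:ℤ→Fin k)‖ ≤ 2*(2⁻¹:ℝ)^n := by
    intro n
    calc ‖fv x K n (y:ℤ→Fin k) - fv x K n (z:ℤ→Fin k)‖
        ≤ ‖fv x K n (y:ℤ→Fin k)‖ + ‖fv x K n (z:ℤ→Fin k)‖ := norm_sub_le _ _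
      _ = 2*(2⁻¹:ℝ)^n := by rw [norm_fv, norm_fv]; ring
  have hnsum : Summable (fun n => ‖fv x K n (y:ℤ→Fin k) - fv x K n (z:ℤ→Fin k)‖) :=
    Summable.of_nonneg_of_le (fun n => norm_nonneg _) hnormle htwo
  -- UPPER BOUND
  have hup : ‖(∑' n, fv x K n (y:ℤ→Fin k)) - (∑' n, fv x K n (z:ℤ→Fin k))‖
      ≤ 4*(2⁻¹:ℝ)^kk := by
    rw [← hsumy.tsum_sub hsumz]
    refine le_trans (norm_tsum_le_tsum_norm hnsum) ?_
    rw [← Summable.sum_add_tsum_nat_add (f := fun n => ‖fv x K n (y:ℤ→Fin k) - fv x K n (z:ℤ→Fin k)‖)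
      kk hnsum]
    have hhead : (∑ i ∈ Finset.range kk,
        ‖fv x K i (y:ℤ→Fin k) - fv x K i (z:ℤ→Fin k)‖) = 0 := by
      apply Finset.sum_eq_zero
      intro i hi
      rw [hfveq i (Finset.mem_range.mp hi), sub_self, norm_zero]
    rw [hhead, zero_add]
    have hs1 : Summable (fun i : ℕ =>
        ‖fv x K (i + kk) (y:ℤ→Fin k) - fv x K (i + kk) (z:ℤ→Fin k)‖) :=
      (summable_nat_add_iff (f := fun n : ℕ =>
        ‖fv x K n (y:ℤ→Fin k) - fv x K n (z:ℤ→Fin k)‖) kk).mpr hnsum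
    have hs2 : Summable (fun i : ℕ => 2*(2⁻¹:ℝ)^(i+kk)) :=
      (summable_nat_add_iff (f := fun n : ℕ => 2*(2⁻¹:ℝ)^n) kk).mpr htwo
    have htail : (∑' i : ℕ, ‖fv x K (i + kk) (y:ℤ→Fin k) - fv x K (i + kk) (z:ℤ→Fin k)‖)
        ≤ ∑' i : ℕ, 2*(2⁻¹:ℝ)^(i+kk) :=
      hs1.tsum_le_tsum (fun i => hnormle (i+kk)) hs2
    refine le_trans htail ?_
    have hc : ∀ i : ℕ, 2*(2⁻¹:ℝ)^(i+kk) = (2*(2⁻¹:ℝ)^kk) * (2⁻¹:ℝ)^i := by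
      intro i; rw [pow_add]; ring
    rw [tsum_congr hc, tsum_mul_left, tsum_geometric_of_lt_one (by norm_num) (by norm_num)]
    rw [show ((1:ℝ) - 2⁻¹)⁻¹ = 2 by norm_num]
    ring_nf
    linarith [hw0]
  -- LOWER BOUND
  set ia := idxF x K kk (y:ℤ→Fin k) with hia
  set g : ℕ → ℝ := fun n => fv x K n (y:ℤ→Fin k) ia - fv x K n (z:ℤ→Fin k) ia with hgdef
  have hgabs : ∀ n, |g n| ≤ 2*(2⁻¹:ℝ)^n := by
    intro n
    rw [hgdef]
    calc |fv x K n (y:ℤ→Fin k) ia - fv x K n (z:ℤ→Fin k) ia|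
        ≤ |fv x K n (y:ℤ→Fin k) ia| + |fv x K n (z:ℤ→Fin k) ia| := by
          rw [sub_eq_add_neg]
          refine le_trans (abs_add_le _ _) ?_
          rw [abs_neg]
      _ ≤ (2⁻¹:ℝ)^n + (2⁻¹:ℝ)^n := add_le_add (fv_coord_abs _ _ _ _ _) (fv_coord_abs _ _ _ _ _)
      _ = 2*(2⁻¹:ℝ)^n := by ring
  have hgsum : Summable g := by
    apply Summable.of_norm
    exact Summable.of_nonneg_of_le (fun n => norm_nonneg _)
      (fun n => by rw [Real.norm_eq_abs]; exact hgabs n) htwo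
  have hly : Summable (fun n => fv x K n (y:ℤ→Fin k) ia) := by
    apply Summable.of_norm
    refine Summable.of_nonneg_of_le (fun n => norm_nonneg _) (fun n => ?_) summable_geo
    rw [Real.norm_eq_abs]; exact fv_coord_abs _ _ _ _ _
  have hlz : Summable (fun n => fv x K n (z:ℤ→Fin k) ia) := by
    apply Summable.of_norm
    refine Summable.of_nonneg_of_le (fun n => norm_nonneg _) (fun n => ?_) summable_geo
    rw [Real.norm_eq_abs]; exact fv_coord_abs _ _ _ _ _
  -- evaluation of coordinates commutes with the sums
  have hlval : ∀ v : EuclideanSpace ℝ (Fin (2 * Mc K)),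
      (innerSL ℝ (EuclideanSpace.single ia (1:ℝ))) v = v ia := by
    intro v
    rw [innerSL_apply_apply, EuclideanSpace.inner_single_left]
    simp
  have hlsum : ((∑' n, fv x K n (y:ℤ→Fin k)) - (∑' n, fv x K n (z:ℤ→Fin k))) ia
      = ∑' n, g n := by
    have h1 := (innerSL ℝ (EuclideanSpace.single ia (1:ℝ))).map_tsum hsumy
    have h2 := (innerSL ℝ (EuclideanSpace.single ia (1:ℝ))).map_tsum hsumz
    have h3 := hlval ((∑' n, fv x K n (y:ℤ→Fin k)) - (∑' n, fv x K n (z:ℤ→Fin k)))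
    rw [map_sub, h1, h2] at h3
    rw [← h3]
    rw [tsum_congr (fun n => hlval (fv x K n (y:ℤ→Fin k))),
        tsum_congr (fun n => hlval (fv x K n (z:ℤ→Fin k)))]
    exact (hly.tsum_sub hlz).symm
  -- structure of g
  have hg0 : ∀ n, n < kk → g n = 0 := by
    intro n hn
    rw [hgdef]
    simp only
    rw [hfveq n hn, sub_self]
  have hgkk : g kk = (2⁻¹:ℝ)^kk := by
    rw [hgdef]
    simp only
    rw [hia, fv_coord_self, fv_coord_ne x K kk (z:ℤ→Fin k) (hia ▸ hidx)]
    ring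
  have hgpar : ∀ n, n % 2 ≠ kk % 2 → g n = 0 := by
    intro n hn
    rw [hgdef]
    simp only
    rw [fv_coord_ne x K n (y:ℤ→Fin k) (by rw [hia]; exact idxF_parity x K _ _ (fun a => hn a.symm)),
        fv_coord_ne x K n (z:ℤ→Fin k) (by rw [hia]; exact idxF_parity x K _ _ (fun a => hn a.symm)),
        sub_self]
  have hhead2 : (∑ i ∈ Finset.range (kk+2), g i) = (2⁻¹:ℝ)^kk := by
    rw [Finset.sum_eq_single_of_mem kk (Finset.mem_range.mpr (by omega))]
    · exact hgkk
    · intro b hb hbne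
      rcases lt_or_gt_of_ne hbne with h | h
      · exact hg0 b h
      · have hb2 : b = kk + 1 := by
          have := Finset.mem_range.mp hb
          omega
        apply hgpar
        omega
  set tb : ℕ → ℝ := fun i => if Even i then 2*(2⁻¹:ℝ)^(i+(kk+2)) else 0 with htbdef
  have htb_sum : Summable tb := by
    refine Summable.of_nonneg_of_le (fun i => ?_) (fun i => ?_)
      ((summable_nat_add_iff (f := fun n : ℕ => 2*(2⁻¹:ℝ)^n) (kk+2)).mpr htwo)
    · rw [htbdef]; dsimp only; split
      · positivity
      · exact le_refl _
    · rw [htbdef]; dsimp only; split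
      · exact le_refl _
      · positivity
  have htail2 : |∑' i : ℕ, g (i + (kk+2))| ≤ (2/3) * (2⁻¹:ℝ)^kk := by
    have hgs' : Summable (fun i => |g (i + (kk+2))|) := by
      have := ((summable_nat_add_iff (f := g) (kk+2)).mpr hgsum).abs
      exact this
    have h1 : |∑' i : ℕ, g (i + (kk+2))| ≤ ∑' i : ℕ, |g (i + (kk+2))| := by
      have := norm_tsum_le_tsum_norm (f := fun i => g (i + (kk+2)))
        (by simpa [Real.norm_eq_abs] using hgs')
      simpa [Real.norm_eq_abs] using this
    have h2 : ∀ i, |g (i + (kk+2))| ≤ tb i := by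
      intro i
      rcases Nat.even_or_odd i with he | ho
      · rw [htbdef]; dsimp only; rw [if_pos he]
        exact hgabs _
      · have hp2 : (i + (kk+2)) % 2 ≠ kk % 2 := by
          have h5 : i % 2 = 1 := Nat.odd_iff.mp ho
          omega
        rw [hgpar _ hp2, abs_zero, htbdef]
        dsimp only
        rw [if_neg (Nat.not_even_iff_odd.mpr ho)]
    have h3 : (∑' i, |g (i + (kk+2))|) ≤ ∑' i, tb i := hgs'.tsum_le_tsum h2 htb_sum
    have h4 : (∑' i, tb i) = 2*(2⁻¹:ℝ)^(kk+2) * (4/3) := by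
      have he : ∀ i, tb i = (2*(2⁻¹:ℝ)^(kk+2)) * (if Even i then (2⁻¹:ℝ)^i else 0) := by
        intro i
        rw [htbdef]; dsimp only
        split
        · rw [pow_add]; ring
        · ring
      rw [tsum_congr he, tsum_mul_left, even_geom]
    have h6 : (2:ℝ)*(2⁻¹:ℝ)^(kk+2) * (4/3) = (2/3) * (2⁻¹:ℝ)^kk := by
      rw [show (2⁻¹:ℝ)^(kk+2) = (2⁻¹:ℝ)^kk * (2⁻¹:ℝ)^2 by rw [pow_add]]
      norm_num
      ring
    calc |∑' i : ℕ, g (i + (kk+2))| ≤ ∑' i, tb i := le_trans h1 h3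
      _ = (2/3) * (2⁻¹:ℝ)^kk := by rw [h4, h6]
  have hlow : (2⁻¹:ℝ)^kk / 3 ≤ |∑' n, g n| := by
    have he : (∑' n, g n) = (2⁻¹:ℝ)^kk + ∑' i : ℕ, g (i + (kk+2)) := by
      rw [← Summable.sum_add_tsum_nat_add (f := g) (kk+2) hgsum, hhead2]
    rw [he]
    have hTbounds := abs_le.mp htail2
    have h5 : (2⁻¹:ℝ)^kk / 3 ≤ (2⁻¹:ℝ)^kk + ∑' i : ℕ, g (i + (kk+2)) := by
      linarith [hTbounds.1]
    exact le_trans h5 (le_abs_self _)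
  -- coordinate bound
  have hcoord : |((∑' n, fv x K n (y:ℤ→Fin k)) - (∑' n, fv x K n (z:ℤ→Fin k))) ia|
      ≤ ‖(∑' n, fv x K n (y:ℤ→Fin k)) - (∑' n, fv x K n (z:ℤ→Fin k))‖ := by
    have h := abs_real_inner_le_norm (EuclideanSpace.single ia (1:ℝ))
      ((∑' n, fv x K n (y:ℤ→Fin k)) - (∑' n, fv x K n (z:ℤ→Fin k)))
    rw [EuclideanSpace.norm_single] at h
    simpa [EuclideanSpace.inner_single_left] using h
  have hlower : (2⁻¹:ℝ)^kk / 3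
      ≤ ‖(∑' n, fv x K n (y:ℤ→Fin k)) - (∑' n, fv x K n (z:ℤ→Fin k))‖ := by
    refine le_trans ?_ hcoord
    rw [hlsum]
    exact hlow
  constructor
  · show (1/6) * combDist (y:ℤ→Fin k) (z:ℤ→Fin k)
      ≤ ‖(∑' n, fv x K n (y:ℤ→Fin k)) - (∑' n, fv x K n (z:ℤ→Fin k))‖
    linarith [hDhigh, hlower]
  · show ‖(∑' n, fv x K n (y:ℤ→Fin k)) - (∑' n, fv x K n (z:ℤ→Fin k))‖
      ≤ 6 * combDist (y:ℤ→Fin k) (z:ℤ→Fin k)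
    linarith [hup, hDlow, hw0]

end LRwork


/-- The tiling space (subshift) of a linearly repetitive sequence, with the
combinatorial metric, is f-embeddable. -/
theorem linearlyRepetitive_fEmbeddable {k : ℕ} (hk : 1 ≤ k)
    (x : ℤ → Fin k) (hLR : LinearlyRepetitive x) :
    FEmbeddableSubshift (closure (shiftOrbit x)) := by
  obtain ⟨K, hK, hlr⟩ := hLR
  by_cases hA : LRwork.HasLowComplexity x
  · obtain ⟨T, hT, hper⟩ := LRwork.periodic_of_lowComplexity hlr hA
    exact LRwork.fembed_of_periodic x hT hper
  · exact LRwork.fembed_of_caseB x hK hlr hA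
end

section
/- Let α ∈ (0,1) be irrational and not of bounded type, i.e., for every ε > 0 there exist integers p and q ≥ 1 with |α − p/q| ≤ ε/q² (equivalently, the partial quotients of the continued fraction expansion of α are unbounded). Then the Sturmian subshift (Ξ(α), D) is not f-embeddable: for every L ∈ ℕ, every c ≥ 1 and every map φ : Ξ(α) → ℝ^L, the bounds (1/c)·D(y,z) ≤ ‖φ(y) − φ(z)‖ ≤ c·D(y,z) fail for some y, z ∈ Ξ(α). -/
/-- The Sturmian sequence of parameter `α`: `x_α(n) = ⌊(n+1)α⌋ − ⌊nα⌋`, which for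
irrational `α ∈ (0,1)` takes the values `0` and `1`. -/
noncomputable def sturmianSeq (α : ℝ) (n : ℤ) : Fin 2 :=
  if ⌊((n : ℝ) + 1) * α⌋ - ⌊(n : ℝ) * α⌋ = 1 then 1 else 0

/-- The Sturmian subshift of parameter `α`: the closure of the shift orbit of the
Sturmian sequence `x_α` for the product topology. -/
noncomputable def sturmianSubshift (α : ℝ) : Set (ℤ → Fin 2) :=
  closure (shiftOrbit (sturmianSeq α))

namespace SturmianAux

/-- distance from `x` to the nearest integer -/
noncomputable def nd (x : ℝ) : ℝ := |x - round x|

lemma nd_nonneg (x : ℝ) : 0 ≤ nd x := abs_nonneg _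

lemma nd_le (x : ℝ) (m : ℤ) : nd x ≤ |x - m| := round_le x m

lemma nd_add_le (x y : ℝ) : nd (x + y) ≤ nd x + nd y := by
  have h := nd_le (x + y) (round x + round y)
  have he : x + y - ((round x + round y : ℤ) : ℝ) = (x - round x) + (y - round y) := by
    push_cast; ring
  calc nd (x + y) ≤ |x + y - ((round x + round y : ℤ) : ℝ)| := h
    _ = |(x - round x) + (y - round y)| := by rw [he]
    _ ≤ |x - round x| + |y - round y| := abs_add_le _ _
    _ = nd x + nd y := rfl

lemma nd_int_mul (k : ℤ) (x : ℝ) : nd ((k : ℝ) * x) ≤ |(k : ℝ)| * nd x := by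
  have h := nd_le ((k : ℝ) * x) (k * round x)
  calc nd ((k : ℝ) * x) ≤ |(k : ℝ) * x - ((k * round x : ℤ) : ℝ)| := h
    _ = |(k : ℝ)| * |x - round x| := by push_cast; rw [← abs_mul]; ring_nf
    _ = |(k : ℝ)| * nd x := rfl

lemma nd_pos {x : ℝ} (h : Irrational x) : 0 < nd x :=
  abs_pos.2 (sub_ne_zero.2 (h.ne_int _))

lemma nd_eq_min (x : ℝ) : nd x = min (Int.fract x) (1 - Int.fract x) :=
  abs_sub_round_eq_min x

lemma nd_le_fract (x : ℝ) : nd x ≤ Int.fract x := by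
  rw [nd_eq_min]; exact min_le_left _ _

lemma nd_le_one_sub_fract (x : ℝ) : nd x ≤ 1 - Int.fract x := by
  rw [nd_eq_min]; exact min_le_right _ _

lemma fract_of_neg {y : ℝ} (h1 : -1 ≤ y) (h2 : y < 0) : Int.fract y = y + 1 := by
  have h3 := Int.fract_add_intCast y (1 : ℤ)
  rw [show ((1 : ℤ) : ℝ) = 1 by norm_cast] at h3
  rw [← h3, Int.fract_eq_self.mpr ⟨by linarith, by linarith⟩]

lemma sturmian_eq {α : ℝ} (hα : α ∈ Set.Ioo (0:ℝ) 1) (n : ℤ) :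
    sturmianSeq α n = if 1 - α ≤ Int.fract ((n:ℝ) * α) then 1 else 0 := by
  obtain ⟨h0, h1⟩ := hα
  have hx : ((n:ℝ)) * α = (⌊(n:ℝ)*α⌋ : ℝ) + Int.fract ((n:ℝ)*α) :=
    (Int.floor_add_fract _).symm
  have hkey : ⌊((n:ℝ) + 1) * α⌋ - ⌊(n:ℝ) * α⌋ = ⌊Int.fract ((n:ℝ)*α) + α⌋ := by
    have he : ((n:ℝ) + 1) * α = (⌊(n:ℝ)*α⌋ : ℝ) + (Int.fract ((n:ℝ)*α) + α) := by
      linear_combination hx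
    rw [he, Int.floor_intCast_add]; ring
  have hnn := Int.fract_nonneg ((n:ℝ)*α)
  have hlt := Int.fract_lt_one ((n:ℝ)*α)
  unfold sturmianSeq
  rw [hkey]
  by_cases hcond : 1 - α ≤ Int.fract ((n:ℝ) * α)
  · rw [if_pos hcond, if_pos]
    rw [Int.floor_eq_iff]
    constructor
    · push_cast; linarith
    · push_cast; linarith
  · rw [if_neg hcond, if_neg]
    intro h
    rw [Int.floor_eq_iff] at h
    push_cast at h
    obtain ⟨ha, hb⟩ := h
    exact hcond (by linarith)

lemma sturmian_cases (α : ℝ) (n : ℤ) : sturmianSeq α n = 0 ∨ sturmianSeq α n = 1 := by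
  unfold sturmianSeq; split
  · exact Or.inr rfl
  · exact Or.inl rfl

end SturmianAux

namespace SturmianAux

open Classical in
lemma combDist_eq_of_ne {A : Type*} {y z : ℤ → A} (h : y ≠ z)
    (hex : ∃ N : ℕ, y (N : ℤ) ≠ z (N : ℤ) ∨ y (-(N : ℤ)) ≠ z (-(N : ℤ))) :
    combDist y z = 1 / ((Nat.find hex : ℝ) + 1) := by
  unfold combDist
  rw [dif_neg h]

open Classical in
lemma combDist_le {A : Type*} {y z : ℤ → A} {T : ℕ}
    (hag : ∀ n : ℤ, n.natAbs ≤ T → y n = z n) :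
    combDist y z ≤ 1 / ((T : ℝ) + 2) := by
  by_cases h : y = z
  · unfold combDist; rw [dif_pos h]; positivity
  · have hex : ∃ N : ℕ, y (N : ℤ) ≠ z (N : ℤ) ∨ y (-(N : ℤ)) ≠ z (-(N : ℤ)) := by
      obtain ⟨n, hn⟩ := Function.ne_iff.mp h
      refine ⟨n.natAbs, ?_⟩
      rcases Int.natAbs_eq n with h1 | h1
      · exact Or.inl (by rwa [← h1])
      · exact Or.inr (by rwa [← h1])
    rw [combDist_eq_of_ne h hex]
    have hfind : T + 1 ≤ Nat.find hex := by
      rw [Nat.le_find_iff]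
      intro m hm hbad
      have hm' : m ≤ T := by omega
      rcases hbad with hb | hb
      · exact hb (hag m (by simp [hm']))
      · exact hb (hag (-(m:ℤ)) (by simp [hm']))
    have h1 : (T : ℝ) + 2 ≤ (Nat.find hex : ℝ) + 1 := by
      have : ((T + 1 : ℕ) : ℝ) ≤ (Nat.find hex : ℝ) := by exact_mod_cast hfind
      push_cast at this; linarith
    apply one_div_le_one_div_of_le
    · positivity
    · exact h1

open Classical in
lemma combDist_ge {A : Type*} {y z : ℤ → A} {n₀ : ℤ} (hne : y n₀ ≠ z n₀) :
    1 / ((n₀.natAbs : ℝ) + 1) ≤ combDist y z := by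
  have h : y ≠ z := fun he => hne (by rw [he])
  have hex : ∃ N : ℕ, y (N : ℤ) ≠ z (N : ℤ) ∨ y (-(N : ℤ)) ≠ z (-(N : ℤ)) := by
    refine ⟨n₀.natAbs, ?_⟩
    rcases Int.natAbs_eq n₀ with h1 | h1
    · exact Or.inl (by rwa [← h1])
    · exact Or.inr (by rwa [← h1])
  rw [combDist_eq_of_ne h hex]
  have hfind : Nat.find hex ≤ n₀.natAbs := Nat.find_min' hex (by
    rcases Int.natAbs_eq n₀ with h1 | h1
    · exact Or.inl (by rwa [← h1])
    · exact Or.inr (by rwa [← h1]))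
  apply one_div_le_one_div_of_le
  · positivity
  · have : (Nat.find hex : ℝ) ≤ (n₀.natAbs : ℝ) := by exact_mod_cast hfind
    linarith

/-- key Diophantine lemma: a denominator `Q` whose approximation quality `ε/Q`
beats everything below it by a definite margin `(1-ε)/Q`. -/
lemma exists_good_q {α : ℝ} (hirr : Irrational α)
    (hnbt : ∀ ε : ℝ, 0 < ε → ∃ p q : ℤ, 1 ≤ q ∧
      |α - (p : ℝ) / (q : ℝ)| ≤ ε / (q : ℝ) ^ 2)
    {ε : ℝ} (hε : 0 < ε) (hε1 : ε < 1) :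
    ∃ Q : ℤ, 1 ≤ Q ∧ nd ((Q : ℝ) * α) ≤ ε / Q ∧
      ∀ m : ℤ, 1 ≤ m → m < Q → (1 - ε) / Q ≤ nd ((m : ℝ) * α) := by
  classical
  obtain ⟨p, q, hq1, hpq⟩ := hnbt ε hε
  have hq0 : (0 : ℝ) < (q : ℝ) := by exact_mod_cast hq1
  have hqnd : nd ((q : ℝ) * α) ≤ ε / q := by
    have h1 : nd ((q : ℝ) * α) ≤ |(q : ℝ) * α - p| := nd_le _ p
    have he : (q:ℝ)*α - p = (q:ℝ) * (α - (p:ℝ)/q) := by field_simp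
    have h2 : |(q : ℝ) * α - p| = (q : ℝ) * |α - (p : ℝ) / q| := by
      rw [he, abs_mul, abs_of_pos hq0]
    have h3 : (q : ℝ) * |α - (p : ℝ) / q| ≤ (q : ℝ) * (ε / (q:ℝ)^2) :=
      mul_le_mul_of_nonneg_left hpq (le_of_lt hq0)
    have h4 : (q : ℝ) * (ε / (q:ℝ)^2) = ε / q := by field_simp
    linarith
  -- minimal such denominator
  let P : ℕ → Prop := fun k => 1 ≤ k ∧ nd ((k : ℝ) * α) ≤ ε / q
  have hPq : P q.toNat := by
    constructor
    · omega
    · have hcast : ((q.toNat : ℕ) : ℝ) = (q : ℝ) := by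
        have : ((q.toNat : ℤ) : ℝ) = (q : ℝ) := by norm_cast; omega
        exact_mod_cast this
      rw [hcast]; exact hqnd
  have hPex : ∃ k, P k := ⟨q.toNat, hPq⟩
  set Q0 := Nat.find hPex with hQ0def
  obtain ⟨hQ01, hQ0nd⟩ : P Q0 := Nat.find_spec hPex
  have hQ0q : Q0 ≤ q.toNat := Nat.find_min' hPex hPq
  have hQpos : (0 : ℝ) < ((Q0 : ℤ) : ℝ) := by exact_mod_cast (by omega : (0:ℤ) < (Q0 : ℤ))
  have hδq : nd (((Q0 : ℤ) : ℝ) * α) ≤ ε / q := by rw [Int.cast_natCast]; exact hQ0nd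
  refine ⟨(Q0 : ℤ), by exact_mod_cast hQ01, ?_, ?_⟩
  · have hQle : ((Q0 : ℤ) : ℝ) ≤ (q : ℝ) := by
      have : (Q0 : ℤ) ≤ q := by omega
      exact_mod_cast this
    have hmono : ε / q ≤ ε / ((Q0 : ℤ) : ℝ) :=
      div_le_div_of_nonneg_left (le_of_lt hε) hQpos hQle
    exact le_trans hδq hmono
  · intro m hm1 hmQ
    have hmpos : (0 : ℝ) < (m : ℝ) := by exact_mod_cast hm1
    have hmin : ¬ P m.toNat := Nat.find_min hPex (by omega)
    have hmnd : ε / q < nd ((m : ℝ) * α) := by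
      by_contra hcon
      push_neg at hcon
      apply hmin
      constructor
      · omega
      · have hcast : ((m.toNat : ℕ) : ℝ) = (m : ℝ) := by
          have : ((m.toNat : ℤ) : ℝ) = (m : ℝ) := by norm_cast; omega
          exact_mod_cast this
        rw [hcast]; exact hcon
    set a := round ((m : ℝ) * α) with ha
    set b := round (((Q0 : ℤ) : ℝ) * α) with hb
    have hnda : nd ((m : ℝ) * α) = |(m : ℝ) * α - a| := rfl
    have hndb : nd (((Q0 : ℤ) : ℝ) * α) = |((Q0 : ℤ) : ℝ) * α - b| := rfl
    have hmQ' : (m : ℝ) ≤ ((Q0 : ℤ) : ℝ) := by exact_mod_cast (le_of_lt hmQ)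
    by_cases hcase : m * b = a * (Q0 : ℤ)
    · -- proportional case: contradiction with minimality
      exfalso
      have hmb : ((m : ℝ)) * (b : ℝ) = (a : ℝ) * ((Q0 : ℤ) : ℝ) := by exact_mod_cast hcase
      have hkey : ((Q0 : ℤ) : ℝ) * ((m : ℝ) * α - a) = (m : ℝ) * (((Q0 : ℤ) : ℝ) * α - b) := by
        linear_combination hmb
      have e1 : |((Q0 : ℤ) : ℝ)| * |(m : ℝ) * α - a| = |(m : ℝ)| * |((Q0 : ℤ) : ℝ) * α - b| := by
        rw [← abs_mul, ← abs_mul, hkey]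
      rw [abs_of_pos hQpos, abs_of_pos hmpos] at e1
      have h5 : nd ((m : ℝ) * α) ≤ nd (((Q0 : ℤ) : ℝ) * α) := by
        rw [hnda, hndb]
        nlinarith [abs_nonneg ((m : ℝ) * α - (a:ℝ)), abs_nonneg (((Q0 : ℤ) : ℝ) * α - (b:ℝ))]
      linarith
    · -- determinant case
      have hne0 : m * b - a * (Q0 : ℤ) ≠ 0 := by
        intro hcc; exact hcase (by omega)
      have h1le : (1 : ℝ) ≤ |(m : ℝ) * b - (a : ℝ) * ((Q0 : ℤ) : ℝ)| := by
        have h1' : (1 : ℤ) ≤ |m * b - a * (Q0 : ℤ)| := Int.one_le_abs hne0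
        calc (1:ℝ) ≤ ((|m * b - a * (Q0 : ℤ)| : ℤ) : ℝ) := by exact_mod_cast h1'
          _ = |(m : ℝ) * b - (a : ℝ) * ((Q0 : ℤ) : ℝ)| := by push_cast; ring_nf
      have hdec : (m : ℝ) * b - (a : ℝ) * ((Q0 : ℤ) : ℝ)
          = (m : ℝ) * ((b : ℝ) - ((Q0 : ℤ) : ℝ) * α) + ((Q0 : ℤ) : ℝ) * ((m : ℝ) * α - a) := by
        ring
      have h2 : |(m : ℝ) * b - (a : ℝ) * ((Q0 : ℤ) : ℝ)|
          ≤ (m : ℝ) * nd (((Q0 : ℤ) : ℝ) * α) + ((Q0 : ℤ) : ℝ) * nd ((m : ℝ) * α) := by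
        rw [hdec, hnda, hndb]
        calc |(m : ℝ) * ((b : ℝ) - ((Q0 : ℤ) : ℝ) * α) + ((Q0 : ℤ) : ℝ) * ((m : ℝ) * α - a)|
            ≤ |(m : ℝ) * ((b : ℝ) - ((Q0 : ℤ) : ℝ) * α)| + |((Q0 : ℤ) : ℝ) * ((m : ℝ) * α - a)| :=
              abs_add_le _ _
          _ = (m : ℝ) * |((Q0 : ℤ) : ℝ) * α - (b:ℝ)| + ((Q0 : ℤ) : ℝ) * |(m : ℝ) * α - a| := by
              rw [abs_mul, abs_mul, abs_of_pos hmpos, abs_of_pos hQpos, abs_sub_comm]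
      have h6 : (m : ℝ) * nd (((Q0 : ℤ) : ℝ) * α) ≤ ((Q0 : ℤ) : ℝ) * (ε / q) := by
        have hnn := nd_nonneg (((Q0 : ℤ) : ℝ) * α)
        nlinarith
      have h7 : ((Q0 : ℤ) : ℝ) * (ε / q) ≤ ε := by
        have hQleq : ((Q0 : ℤ) : ℝ) ≤ (q : ℝ) := by exact_mod_cast (by omega : (Q0:ℤ) ≤ q)
        have hmul : ((Q0 : ℤ) : ℝ) * (ε / q) ≤ (q : ℝ) * (ε / q) := by
          apply mul_le_mul_of_nonneg_right hQleq; positivity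
        have heq : (q : ℝ) * (ε / q) = ε := by field_simp
        linarith
      have h8 : 1 - ε ≤ ((Q0 : ℤ) : ℝ) * nd ((m : ℝ) * α) := by linarith
      rw [div_le_iff₀ hQpos]
      linarith

end SturmianAux

namespace SturmianAux

lemma fract_mul_shift {α δ : ℝ} {e bb : ℤ} (heb : (e:ℝ)*α = (bb:ℝ) + δ) (n u : ℤ) :
    Int.fract (((n + u*e : ℤ):ℝ) * α) = Int.fract (Int.fract ((n:ℝ)*α) + (u:ℝ)*δ) := by
  have h1 : ((n + u*e : ℤ):ℝ)*α = ((u*bb : ℤ):ℝ) + ((n:ℝ)*α + (u:ℝ)*δ) := by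
    push_cast; linear_combination (u:ℝ) * heb
  rw [h1, Int.fract_intCast_add]
  have h2 : (n:ℝ)*α + (u:ℝ)*δ = (⌊(n:ℝ)*α⌋:ℝ) + (Int.fract ((n:ℝ)*α) + (u:ℝ)*δ) := by
    linear_combination (-1 : ℝ) * Int.floor_add_fract ((n:ℝ)*α)
  rw [h2, Int.fract_intCast_add]

section Values

variable {α δ : ℝ} {e bb : ℤ} {K : ℕ}

lemma val_e (hα : α ∈ Set.Ioo (0:ℝ) 1) (hδpos : 0 < δ)
    (heb : (e:ℝ)*α = (bb:ℝ) + δ)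
    (hsmall : (4*(K:ℝ)+1)*δ < min α (1-α))
    {u : ℤ} (hu : |u| ≤ 4*(K:ℤ)) :
    (sturmianSeq α (u*e) = 1 ↔ u < 0) := by
  obtain ⟨hα0, hα1⟩ := hα
  have hur : |(u:ℝ)| ≤ 4*(K:ℝ) := by exact_mod_cast hu
  have hm1 : (4*(K:ℝ))*δ < α := by
    have := min_le_left α (1-α); linarith
  have hm2 : (4*(K:ℝ))*δ < 1 - α := by
    have := min_le_right α (1-α); linarith
  have hud : |(u:ℝ)*δ| ≤ 4*(K:ℝ)*δ := by
    rw [abs_mul, abs_of_pos hδpos]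
    exact mul_le_mul_of_nonneg_right hur hδpos.le
  have hud1 := abs_le.mp hud
  have h0 : (u*e : ℤ) = 0 + u*e := by ring
  rw [h0, sturmian_eq ⟨hα0, hα1⟩, fract_mul_shift heb 0 u]
  simp only [Int.cast_zero, zero_mul, Int.fract_zero, zero_add]
  rcases le_or_gt 0 u with hcase | hcase
  · have hu0 : (0:ℝ) ≤ (u:ℝ) := by exact_mod_cast hcase
    have hfr : Int.fract ((u:ℝ)*δ) = (u:ℝ)*δ :=
      Int.fract_eq_self.mpr ⟨mul_nonneg hu0 hδpos.le, by nlinarith⟩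
    rw [hfr, if_neg (by nlinarith)]
    exact iff_of_false (by decide) (by omega)
  · have hu1 : (u:ℝ) ≤ -1 := by exact_mod_cast (by omega : u ≤ -1)
    have hneg : (u:ℝ)*δ < 0 := by nlinarith
    have hfr : Int.fract ((u:ℝ)*δ) = (u:ℝ)*δ + 1 :=
      fract_of_neg (by nlinarith) hneg
    rw [hfr, if_pos (by nlinarith)]
    exact iff_of_true rfl hcase

lemma val_sub_one (hα : α ∈ Set.Ioo (0:ℝ) 1) (hδpos : 0 < δ)
    (heb : (e:ℝ)*α = (bb:ℝ) + δ)
    (hsmall : (4*(K:ℝ)+1)*δ < min α (1-α))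
    {u : ℤ} (hu : |u| ≤ 4*(K:ℤ)) :
    (sturmianSeq α (u*e - 1) = 1 ↔ 0 ≤ u) := by
  obtain ⟨hα0, hα1⟩ := hα
  have hur : |(u:ℝ)| ≤ 4*(K:ℝ) := by exact_mod_cast hu
  have hm1 : (4*(K:ℝ))*δ < α := by
    have := min_le_left α (1-α); linarith
  have hm2 : (4*(K:ℝ))*δ < 1 - α := by
    have := min_le_right α (1-α); linarith
  have hud : |(u:ℝ)*δ| ≤ 4*(K:ℝ)*δ := by
    rw [abs_mul, abs_of_pos hδpos]
    exact mul_le_mul_of_nonneg_right hur hδpos.le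
  have hud1 := abs_le.mp hud
  have h0 : (u*e - 1 : ℤ) = (-1) + u*e := by ring
  have hfrm1 : Int.fract (((-1 : ℤ):ℝ)*α) = 1 - α := by
    have h1 : ((-1 : ℤ):ℝ)*α = -α := by push_cast; ring
    rw [h1, fract_of_neg (by linarith) (by linarith)]; ring
  rw [h0, sturmian_eq ⟨hα0, hα1⟩, fract_mul_shift heb (-1) u, hfrm1]
  have hfr : Int.fract (1 - α + (u:ℝ)*δ) = 1 - α + (u:ℝ)*δ :=
    Int.fract_eq_self.mpr ⟨by nlinarith, by nlinarith⟩
  rw [hfr]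
  rcases le_or_gt 0 u with hcase | hcase
  · have hu0 : (0:ℝ) ≤ (u:ℝ) := by exact_mod_cast hcase
    rw [if_pos (by nlinarith)]
    exact iff_of_true rfl hcase
  · have hu1 : (u:ℝ) ≤ -1 := by exact_mod_cast (by omega : u ≤ -1)
    rw [if_neg (by nlinarith)]
    exact iff_of_false (by decide) (by omega)

end Values

/-- lower bound for `nd (n α)` when `Q ∤ n`. -/
lemma nd_lb {α ε : ℝ} {Q : ℤ} {K : ℕ} (hQ1 : 1 ≤ Q)
    (hεpos : 0 < ε) (hεK : (4*(K:ℝ)+3) * ε < 1)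
    (hQnd : nd ((Q:ℝ)*α) ≤ ε/Q)
    (hlow : ∀ m : ℤ, 1 ≤ m → m < Q → (1-ε)/Q ≤ nd ((m:ℝ)*α))
    {n : ℤ} (hnr : |n| ≤ (2*(K:ℤ)+1)*Q) (hndvd : ¬ (Q ∣ n)) :
    2*(K:ℝ) * nd ((Q:ℝ)*α) < nd ((n:ℝ)*α) := by
  have hQr : (0:ℝ) < (Q:ℝ) := by exact_mod_cast hQ1
  set s := n / Q with hs
  set w := n % Q with hw
  have hn : Q * s + w = n := Int.mul_ediv_add_emod n Q
  have hw0 : 0 ≤ w := Int.emod_nonneg n (by omega)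
  have hwQ : w < Q := Int.emod_lt_of_pos n (by omega)
  have hw1 : 1 ≤ w := by
    rcases eq_or_lt_of_le hw0 with h | h
    · exfalso; exact hndvd (Int.dvd_of_emod_eq_zero h.symm)
    · omega
  have hnabs := abs_le.mp hnr
  have hsabs : |s| ≤ 2*(K:ℤ) + 2 := by
    rw [abs_le]
    constructor
    · nlinarith [hnabs.1]
    · nlinarith [hnabs.2]
  have hsr : |(s:ℝ)| ≤ 2*(K:ℝ) + 2 := by exact_mod_cast hsabs
  have htri : nd ((w:ℝ)*α) ≤ nd ((n:ℝ)*α) + |(s:ℝ)| * nd ((Q:ℝ)*α) := by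
    have he1 : (w:ℝ)*α = (n:ℝ)*α + ((-s : ℤ):ℝ)*((Q:ℝ)*α) := by
      push_cast
      have : (w:ℝ) = (n:ℝ) - (Q:ℝ)*(s:ℝ) := by exact_mod_cast (by omega : w = n - Q*s)
      rw [this]; ring
    calc nd ((w:ℝ)*α) = nd ((n:ℝ)*α + ((-s : ℤ):ℝ)*((Q:ℝ)*α)) := by rw [he1]
      _ ≤ nd ((n:ℝ)*α) + nd (((-s : ℤ):ℝ)*((Q:ℝ)*α)) := nd_add_le _ _
      _ ≤ nd ((n:ℝ)*α) + |((-s : ℤ):ℝ)| * nd ((Q:ℝ)*α) := by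
          have := nd_int_mul (-s) ((Q:ℝ)*α); linarith
      _ = nd ((n:ℝ)*α) + |(s:ℝ)| * nd ((Q:ℝ)*α) := by push_cast; rw [abs_neg]
  have h2 : (1-ε)/Q ≤ nd ((w:ℝ)*α) := hlow w hw1 hwQ
  have hndQnn := nd_nonneg ((Q:ℝ)*α)
  have h3 : |(s:ℝ)| * nd ((Q:ℝ)*α) ≤ (2*(K:ℝ)+2) * (ε/Q) := by
    have h4 : |(s:ℝ)| * nd ((Q:ℝ)*α) ≤ (2*(K:ℝ)+2) * nd ((Q:ℝ)*α) :=
      mul_le_mul_of_nonneg_right hsr hndQnn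
    have h5 : (2*(K:ℝ)+2) * nd ((Q:ℝ)*α) ≤ (2*(K:ℝ)+2) * (ε/Q) := by
      apply mul_le_mul_of_nonneg_left hQnd; positivity
    linarith
  have h6 : 2*(K:ℝ) * nd ((Q:ℝ)*α) ≤ 2*(K:ℝ)*(ε/Q) := by
    apply mul_le_mul_of_nonneg_left hQnd; positivity
  have h7 : (4*(K:ℝ)+2)*(ε/Q) < (1-ε)/Q := by
    rw [show (4*(K:ℝ)+2)*(ε/Q) = ((4*(K:ℝ)+2)*ε)/Q by ring]
    rw [div_lt_div_iff_of_pos_right hQr]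
    linarith
  linarith

end SturmianAux

namespace SturmianAux

section Main

variable {α δ ε : ℝ} {Q e bb : ℤ} {K : ℕ}

lemma agree (hα : α ∈ Set.Ioo (0:ℝ) 1) (hQ1 : 1 ≤ Q) (hδpos : 0 < δ)
    (hδdef : δ = nd ((Q:ℝ)*α))
    (heb : (e:ℝ)*α = (bb:ℝ) + δ) (heQ : e = Q ∨ e = -Q)
    (hεpos : 0 < ε) (hεK : (4*(K:ℝ)+3) * ε < 1)
    (hQnd : nd ((Q:ℝ)*α) ≤ ε/Q)
    (hlow : ∀ m : ℤ, 1 ≤ m → m < Q → (1-ε)/Q ≤ nd ((m:ℝ)*α))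
    (hsmall : (4*(K:ℝ)+1)*δ < min α (1-α))
    (hK2 : 2 ≤ K)
    {i j n : ℤ} (hiK : (K:ℤ) ≤ i) (hi2K : i ≤ 2*(K:ℤ)) (hjK : (K:ℤ) ≤ j)
    (hj2K : j ≤ 2*(K:ℤ)) (hn : |n| ≤ (K:ℤ)*Q - 2) :
    sturmianSeq α (n + i*e) = sturmianSeq α (n + j*e) := by
  have heabs : |e| = Q := by
    rcases heQ with h | h
    · rw [h]; exact abs_of_pos (by omega)
    · rw [h, abs_neg]; exact abs_of_pos (by omega)
  have hKZ : (2:ℤ) ≤ (K:ℤ) := by exact_mod_cast hK2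
  have hKQ : (1:ℤ) ≤ (K:ℤ)*Q := by nlinarith
  by_cases hd1 : e ∣ n
  · obtain ⟨u, hu⟩ := hd1
    have hn' : |e| * |u| ≤ (K:ℤ)*Q - 2 := by rw [← abs_mul, ← hu]; exact hn
    rw [heabs] at hn'
    have hub : |u| ≤ (K:ℤ) - 1 := by nlinarith [abs_nonneg u]
    have h1 : n + i*e = (u+i)*e := by rw [hu]; ring
    have h2 : n + j*e = (u+j)*e := by rw [hu]; ring
    rw [h1, h2]
    have habsi : |u+i| ≤ 4*(K:ℤ) := by
      have := abs_le.mp hub; rw [abs_le]; omega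
    have habsj : |u+j| ≤ 4*(K:ℤ) := by
      have := abs_le.mp hub; rw [abs_le]; omega
    have hi0 : ¬ (u + i < 0) := by have := abs_le.mp hub; omega
    have hj0 : ¬ (u + j < 0) := by have := abs_le.mp hub; omega
    have e1 : sturmianSeq α ((u+i)*e) = 0 := by
      rcases sturmian_cases α ((u+i)*e) with h | h
      · exact h
      · exact absurd ((val_e hα hδpos heb hsmall habsi).mp h) hi0
    have e2 : sturmianSeq α ((u+j)*e) = 0 := by
      rcases sturmian_cases α ((u+j)*e) with h | h
      · exact h
      · exact absurd ((val_e hα hδpos heb hsmall habsj).mp h) hj0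
    rw [e1, e2]
  · by_cases hd2 : e ∣ (n+1)
    · obtain ⟨u, hu⟩ := hd2
      have hn1 : |n+1| ≤ (K:ℤ)*Q - 1 := by
        have := abs_le.mp hn; rw [abs_le]; omega
      have hn' : |e| * |u| ≤ (K:ℤ)*Q - 1 := by rw [← abs_mul, ← hu]; exact hn1
      rw [heabs] at hn'
      have hub : |u| ≤ (K:ℤ) := by nlinarith [abs_nonneg u]
      have h1 : n + i*e = (u+i)*e - 1 := by
        have : n = e*u - 1 := by omega
        rw [this]; ring
      have h2 : n + j*e = (u+j)*e - 1 := by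
        have : n = e*u - 1 := by omega
        rw [this]; ring
      rw [h1, h2]
      have habsi : |u+i| ≤ 4*(K:ℤ) := by
        have := abs_le.mp hub; rw [abs_le]; omega
      have habsj : |u+j| ≤ 4*(K:ℤ) := by
        have := abs_le.mp hub; rw [abs_le]; omega
      have hi0 : 0 ≤ u + i := by have := abs_le.mp hub; omega
      have hj0 : 0 ≤ u + j := by have := abs_le.mp hub; omega
      rw [(val_sub_one hα hδpos heb hsmall habsi).mpr hi0,
        (val_sub_one hα hδpos heb hsmall habsj).mpr hj0]
    · -- generic position
      have hQn : ¬ (Q ∣ n) := by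
        intro hdvd; apply hd1
        rcases heQ with h | h
        · rw [h]; exact hdvd
        · rw [h]; exact (neg_dvd).mpr hdvd
      have hQn1 : ¬ (Q ∣ (n+1)) := by
        intro hdvd; apply hd2
        rcases heQ with h | h
        · rw [h]; exact hdvd
        · rw [h]; exact (neg_dvd).mpr hdvd
      have hrange : |n| ≤ (2*(K:ℤ)+1)*Q := by
        have := abs_le.mp hn; rw [abs_le]
        constructor <;> nlinarith
      have hrange1 : |n+1| ≤ (2*(K:ℤ)+1)*Q := by
        have := abs_le.mp hn; rw [abs_le]
        constructor <;> nlinarith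
      have hb1 : 2*(K:ℝ)*δ < nd ((n:ℝ)*α) := by
        rw [hδdef]; exact nd_lb hQ1 hεpos hεK hQnd hlow hrange hQn
      have hb2 : 2*(K:ℝ)*δ < nd (((n+1 : ℤ):ℝ)*α) := by
        rw [hδdef]; exact nd_lb hQ1 hεpos hεK hQnd hlow hrange1 hQn1
      set t := Int.fract ((n:ℝ)*α) with ht
      have ht0 : 0 ≤ t := Int.fract_nonneg _
      have ht1 : t < 1 - 2*(K:ℝ)*δ := by
        have := nd_le_one_sub_fract ((n:ℝ)*α); linarith
      have ht2 : 2*(K:ℝ)*δ < |t + α - 1| := by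
        have hle : nd (((n+1 : ℤ):ℝ)*α) ≤ |t + α - 1| := by
          have h1 := nd_le (((n+1 : ℤ):ℝ)*α) (⌊(n:ℝ)*α⌋ + 1)
          have h2 : ((n+1 : ℤ):ℝ)*α - ((⌊(n:ℝ)*α⌋ + 1 : ℤ):ℝ) = t + α - 1 := by
            push_cast
            linear_combination (-1:ℝ) * Int.floor_add_fract ((n:ℝ)*α)
          rwa [h2] at h1
        linarith
      have hKr : (0:ℝ) ≤ (K:ℝ) := by positivity
      have key : ∀ u : ℤ, (K:ℤ) ≤ u → u ≤ 2*(K:ℤ) →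
          (sturmianSeq α (n + u*e) = 1 ↔ 1 - α ≤ t + (u:ℝ)*δ) := by
        intro u huK hu2K
        have hu0 : (0:ℝ) ≤ (u:ℝ) := by
          exact_mod_cast (show (0:ℤ) ≤ u by omega)
        have hu2Kr : (u:ℝ) ≤ 2*(K:ℝ) := by exact_mod_cast hu2K
        have hud : (u:ℝ)*δ ≤ 2*(K:ℝ)*δ := mul_le_mul_of_nonneg_right hu2Kr hδpos.le
        have hfr : Int.fract (((n + u*e : ℤ):ℝ)*α) = t + (u:ℝ)*δ := by
          rw [fract_mul_shift heb n u, ← ht]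
          exact Int.fract_eq_self.mpr ⟨by nlinarith, by nlinarith⟩
        rw [sturmian_eq hα, hfr]
        split_ifs with h
        · exact iff_of_true rfl h
        · exact iff_of_false (by decide) h
      have hir : (K:ℝ) ≤ (i:ℝ) ∧ (i:ℝ) ≤ 2*(K:ℝ) := ⟨by exact_mod_cast hiK, by exact_mod_cast hi2K⟩
      have hjr : (K:ℝ) ≤ (j:ℝ) ∧ (j:ℝ) ≤ 2*(K:ℝ) := ⟨by exact_mod_cast hjK, by exact_mod_cast hj2K⟩
      rcases le_or_gt (1-α) t with hcase | hcase
      · have e1 : sturmianSeq α (n + i*e) = 1 :=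
          (key i hiK hi2K).mpr (by
            have h0 : (0:ℝ) ≤ (i:ℝ)*δ := mul_nonneg (le_trans hKr hir.1) hδpos.le
            linarith)
        have e2 : sturmianSeq α (n + j*e) = 1 :=
          (key j hjK hj2K).mpr (by
            have h0 : (0:ℝ) ≤ (j:ℝ)*δ := mul_nonneg (le_trans hKr hjr.1) hδpos.le
            linarith)
        rw [e1, e2]
      · have habs : |t + α - 1| = 1 - α - t := by
          rw [abs_of_neg (by linarith)]; ring
        rw [habs] at ht2
        have e1 : sturmianSeq α (n + i*e) = 0 := by
          rcases sturmian_cases α (n + i*e) with h | h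
          · exact h
          · exfalso
            have h5 := (key i hiK hi2K).mp h
            have h6 : (i:ℝ)*δ ≤ 2*(K:ℝ)*δ := mul_le_mul_of_nonneg_right hir.2 hδpos.le
            linarith
        have e2 : sturmianSeq α (n + j*e) = 0 := by
          rcases sturmian_cases α (n + j*e) with h | h
          · exact h
          · exfalso
            have h5 := (key j hjK hj2K).mp h
            have h6 : (j:ℝ)*δ ≤ 2*(K:ℝ)*δ := mul_le_mul_of_nonneg_right hjr.2 hδpos.le
            linarith
        rw [e1, e2]

lemma disagree (hα : α ∈ Set.Ioo (0:ℝ) 1) (hδpos : 0 < δ)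
    (heb : (e:ℝ)*α = (bb:ℝ) + δ)
    (hsmall : (4*(K:ℝ)+1)*δ < min α (1-α)) (hK1 : 1 ≤ K)
    {i j : ℤ} (hiK : (K:ℤ) ≤ i) (hij : i < j) (hj2K : j ≤ 2*(K:ℤ)) :
    sturmianSeq α ((-(i+1))*e + i*e) ≠ sturmianSeq α ((-(i+1))*e + j*e) := by
  have h1 : (-(i+1))*e + i*e = (-1)*e := by ring
  have h2 : (-(i+1))*e + j*e = (j-i-1)*e := by ring
  rw [h1, h2]
  have e1 : sturmianSeq α ((-1)*e) = 1 :=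
    (val_e hα hδpos heb hsmall (by rw [abs_le]; omega)).mpr (by omega)
  have e2 : sturmianSeq α ((j-i-1)*e) = 0 := by
    rcases sturmian_cases α ((j-i-1)*e) with h | h
    · exact h
    · exfalso
      have := (val_e hα hδpos heb hsmall (by rw [abs_le]; omega)).mp h
      omega
  rw [e1, e2]
  decide

end Main

end SturmianAux


set_option maxHeartbeats 1000000 in
open SturmianAux in
/-- If `α ∈ (0,1)` is irrational and not of bounded type (for every `ε > 0`
there are integers `p`, `q ≥ 1` with `|α − p/q| ≤ ε/q²`), then the Sturmian
subshift `Ξ(α)` with the combinatorial metric is not f-embeddable. -/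
theorem sturmian_not_fEmbeddable_of_not_boundedType (α : ℝ)
    (hα : α ∈ Set.Ioo (0 : ℝ) 1) (hirr : Irrational α)
    (hnbt : ∀ ε : ℝ, 0 < ε → ∃ p q : ℤ, 1 ≤ q ∧
      |α - (p : ℝ) / (q : ℝ)| ≤ ε / (q : ℝ) ^ 2) :
    ¬ FEmbeddableSubshift (sturmianSubshift α) := by
  classical
  rintro ⟨L, c, φ, hc1, hφ⟩
  obtain ⟨hα0, hα1⟩ := hα
  have hc0 : (0:ℝ) < c := lt_of_lt_of_le one_pos hc1
  -- a finite 1/2-net of the ball of radius 3c²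
  have hcomp : IsCompact (Metric.closedBall (0 : EuclideanSpace ℝ (Fin L)) (3*c^2)) :=
    isCompact_closedBall _ _
  have htb := hcomp.totallyBounded
  rw [Metric.totallyBounded_iff] at htb
  obtain ⟨T0, hT0fin, hcov⟩ := htb (1/2) (by norm_num)
  obtain ⟨K, hKdef⟩ : ∃ K : ℕ, K = hT0fin.toFinset.card + 2 := ⟨_, rfl⟩
  have hK2 : 2 ≤ K := by omega
  have hK0 : (0:ℝ) < (K:ℝ) := by
    have : (0:ℕ) < K := by omega
    exact_mod_cast this
  have hK2r : (2:ℝ) ≤ (K:ℝ) := by exact_mod_cast hK2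
  -- choice of ε
  have hmin0 : 0 < min α (1-α) := lt_min (by linarith) (by linarith)
  have hmin1 : min α (1-α) ≤ 1 := le_trans (min_le_left _ _) (by linarith)
  set ε : ℝ := min α (1-α) / (100*((K:ℝ)+1)) with hεdef
  have hD : (0:ℝ) < 100*((K:ℝ)+1) := by positivity
  have hεpos : 0 < ε := by positivity
  have hεeq : ε * (100*((K:ℝ)+1)) = min α (1-α) := by
    rw [hεdef]; field_simp
  have hεK : (4*(K:ℝ)+3)*ε < 1 := by
    nlinarith [mul_pos hK0 hεpos]
  have hε1 : ε < 1 := by nlinarith [mul_pos hK0 hεpos]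
  -- the good denominator
  obtain ⟨Q, hQ1, hQnd, hlow⟩ := exists_good_q hirr hnbt hεpos hε1
  have hQr : (0:ℝ) < (Q:ℝ) := by exact_mod_cast hQ1
  have hQ1r : (1:ℝ) ≤ (Q:ℝ) := by exact_mod_cast hQ1
  set δ : ℝ := nd ((Q:ℝ)*α) with hδdef
  have hδpos : 0 < δ := nd_pos (hirr.intCast_mul (by omega : Q ≠ 0))
  have hδε : δ ≤ ε/Q := hQnd
  have hδεsimple : δ ≤ ε := by
    have h1 : ε/Q ≤ ε/1 := div_le_div_of_nonneg_left hεpos.le one_pos hQ1r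
    simpa using le_trans hδε h1
  have hsmall : (4*(K:ℝ)+1)*δ < min α (1-α) := by
    nlinarith [mul_pos hK0 hεpos, mul_nonneg hK0.le (sub_nonneg.mpr hδεsimple)]
  -- the shift step e with e·α = bb + δ mod 1
  obtain ⟨e, bb, heQ, heb⟩ : ∃ e bb : ℤ, (e = Q ∨ e = -Q) ∧ (e:ℝ)*α = (bb:ℝ) + δ := by
    rcases le_or_gt 0 ((Q:ℝ)*α - round ((Q:ℝ)*α)) with h | h
    · refine ⟨Q, round ((Q:ℝ)*α), Or.inl rfl, ?_⟩
      rw [hδdef]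
      unfold nd
      rw [abs_of_nonneg h]; ring
    · refine ⟨-Q, -round ((Q:ℝ)*α), Or.inr rfl, ?_⟩
      rw [hδdef]
      unfold nd
      rw [abs_of_neg h]; push_cast; ring
  have hQtoNatZ : (Q.toNat : ℤ) = Q := Int.toNat_of_nonneg (by omega)
  have hQtoNatR : ((Q.toNat : ℕ) : ℝ) = (Q:ℝ) := by exact_mod_cast hQtoNatZ
  -- the points
  set x : ℕ → (ℤ → Fin 2) := fun i => fun m => sturmianSeq α (m + (i:ℤ)*e) with hxdef
  have hxe : ∀ (i : ℕ) (n : ℤ), x i n = sturmianSeq α (n + (i:ℤ)*e) := fun _ _ => rfl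
  have hmem : ∀ i : ℕ, x i ∈ sturmianSubshift α := fun i =>
    subset_closure ⟨(i:ℤ)*e, rfl⟩
  set Y : ℕ → ↥(sturmianSubshift α) := fun i => ⟨x i, hmem i⟩ with hYdef
  have hYcoe : ∀ i : ℕ, ((Y i : ℤ → Fin 2)) = x i := fun _ => rfl
  have hKQnat : 2 ≤ K * Q.toNat := by
    have h1 : 1 ≤ Q.toNat := by omega
    calc 2 = 2 * 1 := by ring
      _ ≤ K * Q.toNat := Nat.mul_le_mul hK2 h1
  -- upper bound on distances
  have hdub : ∀ i j : ℕ, K ≤ i → i ≤ 2*K → K ≤ j → j ≤ 2*K →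
      combDist (x i) (x j) ≤ 1/((K:ℝ)*Q) := by
    intro i j h1 h2 h3 h4
    have hagree : ∀ n : ℤ, n.natAbs ≤ K * Q.toNat - 2 → x i n = x j n := by
      intro n hn
      rw [hxe, hxe]
      apply agree ⟨hα0, hα1⟩ hQ1 hδpos hδdef heb heQ hεpos hεK hQnd hlow hsmall hK2
      · exact_mod_cast h1
      · exact_mod_cast (by exact_mod_cast h2 : (i:ℤ) ≤ ((2*K : ℕ) : ℤ))
      · exact_mod_cast h3
      · exact_mod_cast (by exact_mod_cast h4 : (j:ℤ) ≤ ((2*K : ℕ) : ℤ))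
      · have hfg : ((K*Q.toNat - 2 : ℕ):ℤ) = (K:ℤ)*Q - 2 := by
          rw [Nat.cast_sub hKQnat]; push_cast [hQtoNatZ]; ring
        rw [Int.abs_eq_natAbs]; omega
    have hcd := combDist_le hagree
    have hT2 : ((K * Q.toNat - 2 : ℕ):ℝ) + 2 = (K:ℝ)*(Q:ℝ) := by
      rw [Nat.cast_sub hKQnat]
      push_cast [hQtoNatR]
      ring
    rwa [hT2] at hcd
  -- lower bound on distances
  have hdlb : ∀ i j : ℕ, K ≤ i → i < j → j ≤ 2*K →
      1/((2*(K:ℝ)+1)*Q + 1) ≤ combDist (x i) (x j) := by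
    intro i j h1 h2 h3
    have hne : x i ((-(((i:ℕ):ℤ)+1))*e) ≠ x j ((-(((i:ℕ):ℤ)+1))*e) := by
      rw [hxe, hxe]
      exact disagree ⟨hα0, hα1⟩ hδpos heb hsmall (by omega)
        (by exact_mod_cast h1) (by exact_mod_cast h2)
        (by exact_mod_cast (by exact_mod_cast h3 : (j:ℤ) ≤ ((2*K : ℕ) : ℤ)))
    have hcd := combDist_ge hne
    have hnat : (((-(((i:ℕ):ℤ)+1))*e).natAbs : ℝ) ≤ (2*(K:ℝ)+1)*Q := by
      have h8a : (-(((i:ℕ):ℤ)+1)).natAbs = i+1 := by omega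
      have h8b : e.natAbs = Q.toNat := by rcases heQ with h | h <;> subst h <;> omega
      have h8 : ((-(((i:ℕ):ℤ)+1))*e).natAbs = (i+1) * Q.toNat := by
        rw [Int.natAbs_mul, h8a, h8b]
      rw [h8]
      push_cast [hQtoNatR]
      have h9 : ((i:ℝ)+1) ≤ 2*(K:ℝ)+1 := by
        have : (i:ℝ) ≤ 2*(K:ℝ) := by exact_mod_cast (by omega : i ≤ 2*K)
        linarith
      nlinarith [hQr]
    refine le_trans ?_ hcd
    apply one_div_le_one_div_of_le
    · positivity
    · linarith
  -- rescaled images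
  set R : ℝ := c*((2*(K:ℝ)+1)*Q + 1) with hRdef
  have hRpos : 0 < R := by positivity
  set w : ℕ → EuclideanSpace ℝ (Fin L) := fun i => R • (φ (Y i) - φ (Y (2*K))) with hwdef
  have hweval : ∀ i, w i = R • (φ (Y i) - φ (Y (2*K))) := fun _ => rfl
  have hBpos : (0:ℝ) < (K:ℝ)*Q := by positivity
  have hXB : (2*(K:ℝ)+1)*Q + 1 ≤ 3*((K:ℝ)*Q) := by
    have h1 : 1*(Q:ℝ) ≤ ((K:ℝ)-1)*Q := mul_le_mul_of_nonneg_right (by linarith) hQr.le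
    linarith
  have hwball : ∀ i, K ≤ i → i ≤ 2*K →
      w i ∈ Metric.closedBall (0 : EuclideanSpace ℝ (Fin L)) (3*c^2) := by
    intro i h1 h2
    rw [Metric.mem_closedBall, dist_zero_right]
    have hnorm : ‖w i‖ = R * ‖φ (Y i) - φ (Y (2*K))‖ := by
      rw [hweval, norm_smul, Real.norm_eq_abs, abs_of_pos hRpos]
    rw [hnorm]
    have hub := hdub i (2*K) h1 h2 (by omega) (by omega)
    have hφub := (hφ (Y i) (Y (2*K))).2
    rw [hYcoe, hYcoe] at hφub
    have h5 : ‖φ (Y i) - φ (Y (2*K))‖ ≤ c * (1/((K:ℝ)*Q)) := by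
      calc ‖φ (Y i) - φ (Y (2*K))‖ ≤ c * combDist (x i) (x (2*K)) := hφub
        _ ≤ c * (1/((K:ℝ)*Q)) := mul_le_mul_of_nonneg_left hub hc0.le
    have h6 : R * ‖φ (Y i) - φ (Y (2*K))‖ ≤ R * (c * (1/((K:ℝ)*Q))) :=
      mul_le_mul_of_nonneg_left h5 hRpos.le
    have h7a : c^2*((2*(K:ℝ)+1)*Q + 1) ≤ 3*c^2*((K:ℝ)*Q) := by
      nlinarith [mul_le_mul_of_nonneg_left hXB (sq_nonneg c)]
    have h7 : R * (c * (1/((K:ℝ)*Q))) ≤ 3*c^2 := by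
      have hinv : (0:ℝ) ≤ ((K:ℝ)*(Q:ℝ))⁻¹ := by positivity
      have h7b := mul_le_mul_of_nonneg_right h7a hinv
      have e1 : c^2*((2*(K:ℝ)+1)*Q + 1) * ((K:ℝ)*(Q:ℝ))⁻¹ = R * (c * (1/((K:ℝ)*Q))) := by
        rw [hRdef]; ring
      have e2 : 3*c^2*((K:ℝ)*(Q:ℝ)) * ((K:ℝ)*(Q:ℝ))⁻¹ = 3*c^2 := by
        field_simp
      rw [e1, e2] at h7b
      exact h7b
    linarith
  -- pigeonhole
  set g : ℕ → EuclideanSpace ℝ (Fin L) := fun i =>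
    if h : ∃ t0 ∈ T0, w i ∈ Metric.ball t0 (1/2) then h.choose else 0 with hgdef
  have hgspec : ∀ i ∈ Finset.Icc K (2*K),
      g i ∈ T0 ∧ w i ∈ Metric.ball (g i) (1/2) := by
    intro i hi
    rw [Finset.mem_Icc] at hi
    have hw := hwball i hi.1 hi.2
    have hex : ∃ t0 ∈ T0, w i ∈ Metric.ball t0 (1/2) := by
      have hm := Set.mem_iUnion₂.mp (hcov hw)
      obtain ⟨t0, ht0, hmm⟩ := hm
      exact ⟨t0, ht0, hmm⟩
    have hgi : g i = hex.choose := by rw [hgdef]; exact dif_pos hex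
    rw [hgi]
    exact ⟨hex.choose_spec.1, hex.choose_spec.2⟩
  have hmaps : ∀ i ∈ Finset.Icc K (2*K), g i ∈ hT0fin.toFinset := by
    intro i hi
    rw [Set.Finite.mem_toFinset]
    exact (hgspec i hi).1
  have hcard : hT0fin.toFinset.card < (Finset.Icc K (2*K)).card := by
    rw [Nat.card_Icc]
    omega
  obtain ⟨i, hi, j, hj, hij, hgeq⟩ :=
    Finset.exists_ne_map_eq_of_card_lt_of_maps_to hcard hmaps
  -- final contradiction, for an ordered pair
  have hfinal : ∀ i j : ℕ, i ∈ Finset.Icc K (2*K) → j ∈ Finset.Icc K (2*K) →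
      i < j → g i = g j → False := by
    intro i j hi hj hlt hgij
    have hi' := Finset.mem_Icc.mp hi
    have hj' := Finset.mem_Icc.mp hj
    -- lower bound on dist (w i) (w j)
    have hlb := hdlb i j hi'.1 hlt hj'.2
    have hφlb := (hφ (Y i) (Y j)).1
    rw [hYcoe, hYcoe] at hφlb
    have hdisteq : dist (w i) (w j) = R * ‖φ (Y i) - φ (Y j)‖ := by
      rw [dist_eq_norm]
      have h7 : w i - w j = R • (φ (Y i) - φ (Y j)) := by
        rw [hweval, hweval, ← smul_sub]
        congr 1
        abel
      rw [h7, norm_smul, Real.norm_eq_abs, abs_of_pos hRpos]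
    have h5 : (1/c) * (1/((2*(K:ℝ)+1)*Q + 1)) ≤ (1/c) * combDist (x i) (x j) :=
      mul_le_mul_of_nonneg_left hlb (by positivity)
    have h6 : R * ((1/c) * (1/((2*(K:ℝ)+1)*Q + 1))) = 1 := by
      rw [hRdef]
      field_simp
    have h8 : 1 ≤ dist (w i) (w j) := by
      rw [hdisteq]
      calc (1:ℝ) = R * ((1/c) * (1/((2*(K:ℝ)+1)*Q + 1))) := h6.symm
        _ ≤ R * ‖φ (Y i) - φ (Y j)‖ :=
            mul_le_mul_of_nonneg_left (le_trans h5 hφlb) hRpos.le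
    -- upper bound from the net
    have hm1 := (hgspec i hi).2
    have hm2 := (hgspec j hj).2
    rw [hgij] at hm1
    rw [Metric.mem_ball] at hm1 hm2
    have h9 : dist (w i) (w j) ≤ dist (w i) (g j) + dist (w j) (g j) :=
      dist_triangle_right _ _ _
    linarith
  rcases Nat.lt_or_ge i j with hlt | hge
  · exact hfinal i j hi hj hlt hgeq
  · have hlt : j < i := by omega
    exact hfinal j i hj hi hlt hgeq.symm
end
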